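/- arXiv:2009.13445 — 5 statements merged into one kernel-verified Lean document; each statement's English description precedes it below -/
import Mathlib

section
/- There is a constant C > 0 such that for any functions f, g, h on Ω = 𝕋 × ℝ with f, ∂₁f, g, ∂₂g, h ∈ L²(Ω), the triple product integral satisfies |∫_Ω f g h dx| ≤ C ‖f‖_{L²}^{1/2} (‖f‖_{L²} + ‖∂₁f‖_{L²})^{1/2} ‖g‖_{L²}^{1/2} ‖∂₂g‖_{L²}^{1/2} ‖h‖_{L²}. -/
open MeasureTheory Real
open scoped ENNReal

noncomputable def pd1 (f : ℝ × ℝ → ℝ) : ℝ × ℝ → ℝ := fun p => deriv (fun x => f (x, p.2)) p.1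
noncomputable def pd2 (f : ℝ × ℝ → ℝ) : ℝ × ℝ → ℝ := fun p => deriv (fun y => f (p.1, y)) p.2
noncomputable def havg (f : ℝ × ℝ → ℝ) : ℝ → ℝ := fun y => ∫ x in (0:ℝ)..1, f (x, y)
noncomputable def osc (f : ℝ × ℝ → ℝ) : ℝ × ℝ → ℝ := fun p => f p - havg f p.2
noncomputable def μΩ : Measure (ℝ × ℝ) :=
  ((volume : Measure ℝ).restrict (Set.Ioc (0:ℝ) 1)).prod (volume : Measure ℝ)
/-- Periodicity with period 1 in the first (horizontal) variable: `f` lives on `𝕋 × ℝ`. -/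
def Per (f : ℝ × ℝ → ℝ) : Prop := ∀ x y, f (x + 1, y) = f (x, y)

/-! ### Auxiliary lemmas -/

/-- 1D Agmon-type bound on the whole line. -/
lemma agmon_line (G : ℝ → ℝ) (hG : Differentiable ℝ G)
    (h2 : Integrable (fun t => G t ^ 2) (volume : Measure ℝ))
    (h1 : Integrable (fun t => G t * deriv G t) (volume : Measure ℝ)) (y : ℝ) :
    G y ^ 2 ≤ 2 * ∫ t, |G t * deriv G t| := by
  have hI0 : 0 ≤ ∫ t, |G t * deriv G t| := integral_nonneg fun t => abs_nonneg _
  refine le_of_forall_pos_le_add fun ε hε => ?_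
  obtain ⟨y', hyy', hy'⟩ : ∃ y', y ≤ y' ∧ G y' ^ 2 < ε := by
    by_contra hcon
    push_neg at hcon
    have hconst : Integrable (fun _ : ℝ => ε) (volume.restrict (Set.Ici y)) := by
      refine (h2.restrict (s := Set.Ici y)).mono' aestronglyMeasurable_const ?_
      refine (ae_restrict_iff' measurableSet_Ici).2 (ae_of_all _ fun t ht => ?_)
      rw [Real.norm_of_nonneg hε.le]
      exact hcon t ht
    rw [integrable_const_iff] at hconst
    rcases hconst with hc | hc
    · exact hε.ne' hc
    · replace hc := hc.measure_univ_lt_top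
      rw [Measure.restrict_apply_univ, Real.volume_Ici] at hc
      exact (lt_irrefl _ hc).elim
  have hderiv : ∀ t ∈ Set.uIcc y y', HasDerivAt (fun s => G s ^ 2) (2 * (G t * deriv G t)) t := by
    intro t _
    have := (hG t).hasDerivAt.fun_pow 2
    exact this.congr_deriv (by ring)
  have hint : IntervalIntegrable (fun t => 2 * (G t * deriv G t)) volume y y' :=
    (h1.const_mul 2).intervalIntegrable
  have key := intervalIntegral.integral_eq_sub_of_hasDerivAt hderiv hint
  have habs : |∫ t in y..y', 2 * (G t * deriv G t)| ≤ 2 * ∫ t, |G t * deriv G t| := by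
    rw [intervalIntegral.integral_of_le hyy']
    calc |∫ t in Set.Ioc y y', 2 * (G t * deriv G t)|
        ≤ ∫ t in Set.Ioc y y', |2 * (G t * deriv G t)| := by
          simpa only [Real.norm_eq_abs] using
            norm_integral_le_integral_norm (μ := volume.restrict (Set.Ioc y y'))
              (fun t => 2 * (G t * deriv G t))
      _ = 2 * ∫ t in Set.Ioc y y', |G t * deriv G t| := by
          simp_rw [abs_mul, abs_two]
          exact integral_const_mul 2 _
      _ ≤ 2 * ∫ t, |G t * deriv G t| := by
          have := setIntegral_le_integral (s := Set.Ioc y y') h1.abs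
            (ae_of_all _ fun t => abs_nonneg _)
          linarith
  have h1' := le_abs_self (∫ t in y..y', 2 * (G t * deriv G t))
  have h2' := neg_abs_le (∫ t in y..y', 2 * (G t * deriv G t))
  nlinarith [key, habs, hy', hyy']

/-- 1D bound in the periodic direction. -/
lemma agmon_periodic (F : ℝ → ℝ) (hF : Differentiable ℝ F) (hper : ∀ x, F (x + 1) = F x)
    (h2 : IntegrableOn (fun t => F t ^ 2) (Set.Ioc 0 1) volume)
    (h1 : IntegrableOn (fun t => F t * deriv F t) (Set.Ioc 0 1) volume) (x : ℝ) :
    F x ^ 2 ≤ (∫ t in Set.Ioc (0:ℝ) 1, F t ^ 2) +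
      2 * ∫ t in Set.Ioc (0:ℝ) 1, |F t * deriv F t| := by
  have hp : Function.Periodic F 1 := hper
  have key : ∀ z : ℝ, 0 ≤ z → z < 1 → F z ^ 2 ≤ (∫ t in Set.Ioc (0:ℝ) 1, F t ^ 2) +
      2 * ∫ t in Set.Ioc (0:ℝ) 1, |F t * deriv F t| := by
    intro z hz0 hz1
    set c := ∫ t in Set.Ioc (0:ℝ) 1, F t ^ 2 with hc
    set J := ∫ t in Set.Ioc (0:ℝ) 1, |F t * deriv F t| with hJ
    have hJ0 : 0 ≤ J := integral_nonneg fun t => abs_nonneg _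
    have goal' : ∀ ε : ℝ, 0 < ε → F z ^ 2 ≤ (c + 2 * J) + ε := by
      intro ε hε
      obtain ⟨s, hs, hFs⟩ : ∃ s ∈ Set.Ioc (0:ℝ) 1, F s ^ 2 < c + ε := by
        by_contra hcon
        push_neg at hcon
        have hge := setIntegral_ge_of_const_le (μ := volume) measurableSet_Ioc
          (by rw [Real.volume_Ioc]; exact ENNReal.ofReal_ne_top)
          (fun t ht => hcon t ht) h2
        rw [Real.volume_real_Ioc] at hge
        norm_num at hge
        linarith
      -- FTC between s and z
      have hsub : Set.uIoc s z ⊆ Set.Ioc (0:ℝ) 1 := by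
        rw [Set.uIoc]
        exact Set.Ioc_subset_Ioc (le_min hs.1.le hz0) (max_le hs.2 hz1.le)
      have hderiv : ∀ t ∈ Set.uIcc s z,
          HasDerivAt (fun r => F r ^ 2) (2 * (F t * deriv F t)) t := by
        intro t _
        have := (hF t).hasDerivAt.fun_pow 2
        exact this.congr_deriv (by ring)
      have hint : IntervalIntegrable (fun t => 2 * (F t * deriv F t)) volume s z := by
        rw [intervalIntegrable_iff]
        exact IntegrableOn.mono_set (h1.const_mul 2) hsub
      have key := intervalIntegral.integral_eq_sub_of_hasDerivAt hderiv hint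
      have habs : |∫ t in s..z, 2 * (F t * deriv F t)| ≤ 2 * J := by
        calc |∫ t in s..z, 2 * (F t * deriv F t)|
            ≤ ∫ t in Set.uIoc s z, |2 * (F t * deriv F t)| := by
              simpa only [Real.norm_eq_abs] using
                intervalIntegral.norm_integral_le_integral_norm_uIoc
                  (f := fun t => 2 * (F t * deriv F t)) (a := s) (b := z)
          _ = 2 * ∫ t in Set.uIoc s z, |F t * deriv F t| := by
              simp_rw [abs_mul, abs_two]
              exact integral_const_mul 2 _
          _ ≤ 2 * J := by
              rw [hJ]
              have := setIntegral_mono_set (μ := volume) h1.abs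
                (ae_of_all _ fun t => abs_nonneg _)
                (HasSubset.Subset.eventuallyLE hsub)
              linarith
      have h1' := le_abs_self (∫ t in s..z, 2 * (F t * deriv F t))
      nlinarith [key, habs, hFs]
    linarith [le_of_forall_pos_le_add goal']
  have hfr : F (Int.fract x) = F x := by
    have h := hp.sub_zsmul_eq (x := x) ⌊x⌋
    rw [Int.fract]
    simpa using h
  rw [← hfr]
  exact key _ (Int.fract_nonneg x) (Int.fract_lt_one x)

lemma rpow_two' (z : ℝ) : z ^ (2:ℝ) = z ^ (2:ℕ) := by
  rw [show (2:ℝ) = ((2:ℕ):ℝ) by norm_num, Real.rpow_natCast]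

lemma integrable_mul_L2 {α : Type*} [MeasurableSpace α] {μ : Measure α} {u v : α → ℝ}
    (hu : MemLp u 2 μ) (hv : MemLp v 2 μ) : Integrable (fun x => u x * v x) μ := by
  have hpqr : (1 : ℝ≥0∞) / 1 = 1 / 2 + 1 / 2 := by
    rw [show (1:ℝ≥0∞)/1 = 1 from by simp, one_div, ENNReal.inv_two_add_inv_two]
  have := (hv.smul hu : MemLp (u • v) 1 μ)
  rw [memLp_one_iff_integrable] at this
  simpa [Pi.smul_apply, smul_eq_mul, Pi.mul_def] using this

lemma integral_sq_eq {α : Type*} [MeasurableSpace α] {μ : Measure α} {u : α → ℝ}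
    (hu : MemLp u 2 μ) : ∫ x, u x ^ 2 ∂μ = (eLpNorm u 2 μ).toReal ^ 2 := by
  have hι : ∫ x, ‖u x‖ ^ ((2:ℝ≥0∞).toReal) ∂μ = ∫ x, u x ^ 2 ∂μ := by
    refine integral_congr_ae (ae_of_all _ fun x => ?_)
    simp [ENNReal.toReal_ofNat, rpow_two', sq_abs]
  have h0 : 0 ≤ ∫ x, u x ^ 2 ∂μ := integral_nonneg fun x => sq_nonneg _
  rw [hu.eLpNorm_eq_integral_rpow_norm two_ne_zero ENNReal.ofNat_ne_top,
    ENNReal.toReal_ofReal (by positivity), hι]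
  rw [← Real.rpow_natCast ((∫ x, u x ^ 2 ∂μ) ^ ((2:ℝ≥0∞).toReal)⁻¹) 2, ← Real.rpow_mul h0]
  norm_num

lemma holder2 {α : Type*} [MeasurableSpace α] {μ : Measure α} {u v : α → ℝ}
    (hu : MemLp u 2 μ) (hv : MemLp v 2 μ) :
    ∫ x, |u x * v x| ∂μ ≤ (eLpNorm u 2 μ).toReal * (eLpNorm v 2 μ).toReal := by
  have hpq : Real.HolderConjugate 2 2 := Real.HolderConjugate.two_two
  have h2 : ENNReal.ofReal (2:ℝ) = 2 := by norm_num
  have H := integral_mul_norm_le_Lp_mul_Lq (μ := μ) hpq (h2 ▸ hu) (h2 ▸ hv)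
  have hL : ∫ x, |u x * v x| ∂μ = ∫ x, ‖u x‖ * ‖v x‖ ∂μ := by
    refine integral_congr_ae (ae_of_all _ fun x => ?_)
    simp [abs_mul]
  rw [hL]
  refine H.trans (le_of_eq ?_)
  have e1 : ∫ x, ‖u x‖ ^ (2:ℝ) ∂μ = (eLpNorm u 2 μ).toReal ^ 2 := by
    rw [← integral_sq_eq hu]
    refine integral_congr_ae (ae_of_all _ fun x => ?_)
    simp [rpow_two', sq_abs]
  have e2 : ∫ x, ‖v x‖ ^ (2:ℝ) ∂μ = (eLpNorm v 2 μ).toReal ^ 2 := by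
    rw [← integral_sq_eq hv]
    refine integral_congr_ae (ae_of_all _ fun x => ?_)
    simp [rpow_two', sq_abs]
  rw [e1, e2]
  rw [← Real.rpow_natCast ((eLpNorm u 2 μ).toReal) 2,
    ← Real.rpow_natCast ((eLpNorm v 2 μ).toReal) 2,
    ← Real.rpow_mul ENNReal.toReal_nonneg, ← Real.rpow_mul ENNReal.toReal_nonneg]
  norm_num

set_option maxHeartbeats 1000000 in
/-- Anisotropic bound on the triple product:
`|∫ f g h| ≤ C ‖f‖^{1/2} (‖f‖ + ‖∂₁f‖)^{1/2} ‖g‖^{1/2} ‖∂₂g‖^{1/2} ‖h‖`. -/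
theorem stmt7 : ∃ C : ℝ, 0 < C ∧ ∀ f g h : ℝ × ℝ → ℝ,
    Per f → Per g → Per h → Differentiable ℝ f → Differentiable ℝ g →
    MemLp f 2 μΩ → MemLp (pd1 f) 2 μΩ →
    MemLp g 2 μΩ → MemLp (pd2 g) 2 μΩ → MemLp h 2 μΩ →
    |∫ p, f p * g p * h p ∂μΩ| ≤
      C * (eLpNorm f 2 μΩ).toReal ^ (1/2 : ℝ) *
        ((eLpNorm f 2 μΩ).toReal + (eLpNorm (pd1 f) 2 μΩ).toReal) ^ (1/2 : ℝ) *
        (eLpNorm g 2 μΩ).toReal ^ (1/2 : ℝ) * (eLpNorm (pd2 g) 2 μΩ).toReal ^ (1/2 : ℝ) *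
        (eLpNorm h 2 μΩ).toReal := by
  refine ⟨2, two_pos, ?_⟩
  intro f g h hpf hpg _hph hdf hdg hf hf1 hg hg2 hh
  set μ : Measure ℝ := (volume : Measure ℝ).restrict (Set.Ioc (0:ℝ) 1) with hμdef
  have hμΩ : μΩ = μ.prod (volume : Measure ℝ) := rfl
  haveI : IsFiniteMeasure μ := ⟨by
    rw [hμdef, Measure.restrict_apply_univ, Real.volume_Ioc]
    exact ENNReal.ofReal_lt_top⟩
  have hff1 : Integrable (fun p => f p * pd1 f p) μΩ := integrable_mul_L2 hf hf1
  have hgg2 : Integrable (fun p => g p * pd2 g p) μΩ := integrable_mul_L2 hg hg2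
  have hf2 : Integrable (fun p => f p ^ 2) μΩ := hf.integrable_sq
  have hg2' : Integrable (fun p => g p ^ 2) μΩ := hg.integrable_sq
  have hh2 : Integrable (fun p => h p ^ 2) μΩ := hh.integrable_sq
  set Nf := (eLpNorm f 2 μΩ).toReal with hNf
  set Nf1 := (eLpNorm (pd1 f) 2 μΩ).toReal with hNf1
  set Ng := (eLpNorm g 2 μΩ).toReal with hNg
  set Ng2 := (eLpNorm (pd2 g) 2 μΩ).toReal with hNg2
  set Nh := (eLpNorm h 2 μΩ).toReal with hNh
  have hNf0 : 0 ≤ Nf := ENNReal.toReal_nonneg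
  have hNf10 : 0 ≤ Nf1 := ENNReal.toReal_nonneg
  have hNg0 : 0 ≤ Ng := ENNReal.toReal_nonneg
  have hNg20 : 0 ≤ Ng2 := ENNReal.toReal_nonneg
  have hNh0 : 0 ≤ Nh := ENNReal.toReal_nonneg
  set A : ℝ → ℝ := fun y => (∫ t in Set.Ioc (0:ℝ) 1, f (t, y) ^ 2) +
    2 * ∫ t in Set.Ioc (0:ℝ) 1, |f (t, y) * pd1 f (t, y)| with hA
  set B : ℝ → ℝ := fun x => ∫ t, |g (x, t) * pd2 g (x, t)| with hB
  have hA0 : ∀ y, 0 ≤ A y := fun y => add_nonneg (integral_nonneg fun t => sq_nonneg _)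
    (mul_nonneg zero_le_two (integral_nonneg fun t => abs_nonneg _))
  have hB0 : ∀ x, 0 ≤ B x := fun x => integral_nonneg fun t => abs_nonneg _
  -- slicewise bounds
  have hfslice : ∀ᵐ y ∂(volume : Measure ℝ), ∀ x, f (x, y) ^ 2 ≤ A y := by
    have he1 : Integrable (fun p : ℝ × ℝ => f p ^ 2) (μ.prod volume) := hf2
    have he2 : Integrable (fun p : ℝ × ℝ => f p * pd1 f p) (μ.prod volume) := hff1
    filter_upwards [he1.prod_left_ae, he2.prod_left_ae] with y hy1 hy2
    intro x
    have hFd : Differentiable ℝ (fun t : ℝ => f (t, y)) :=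
      hdf.comp (differentiable_id.prodMk (differentiable_const y))
    exact agmon_periodic (fun t => f (t, y)) hFd (fun t => hpf t y) hy1 hy2 x
  have hgslice : ∀ᵐ x ∂μ, ∀ t, g (x, t) ^ 2 ≤ 2 * B x := by
    have he1 : Integrable (fun p : ℝ × ℝ => g p ^ 2) (μ.prod volume) := hg2'
    have he2 : Integrable (fun p : ℝ × ℝ => g p * pd2 g p) (μ.prod volume) := hgg2
    filter_upwards [he1.prod_right_ae, he2.prod_right_ae] with x hx1 hx2
    intro t
    have hGd : Differentiable ℝ (fun s : ℝ => g (x, s)) :=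
      hdg.comp ((differentiable_const x).prodMk differentiable_id)
    exact agmon_line (fun s => g (x, s)) hGd hx1 hx2 t
  -- lift to the product space
  have hfae : ∀ᵐ p ∂μΩ, f p ^ 2 ≤ A p.2 := by
    have : ∀ᵐ p ∂(μ.prod (volume : Measure ℝ)), f p ^ 2 ≤ A p.2 := by
      filter_upwards [Measure.quasiMeasurePreserving_snd.ae hfslice] with p hp
      simpa using hp p.1
    exact this
  have hgae : ∀ᵐ p ∂μΩ, g p ^ 2 ≤ 2 * B p.1 := by
    have : ∀ᵐ p ∂(μ.prod (volume : Measure ℝ)), g p ^ 2 ≤ 2 * B p.1 := by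
      filter_upwards [Measure.quasiMeasurePreserving_fst.ae hgslice] with p hp
      simpa using hp p.2
    exact this
  -- integrability of A and B
  have i1 : Integrable (fun y => ∫ x, f (x, y) ^ 2 ∂μ) (volume : Measure ℝ) :=
    (hf2 : Integrable (fun p : ℝ × ℝ => f p ^ 2) (μ.prod volume)).integral_prod_right
  have i2 : Integrable (fun y => ∫ x, |f (x, y) * pd1 f (x, y)| ∂μ) (volume : Measure ℝ) :=
    (hff1.abs : Integrable (fun p : ℝ × ℝ => |f p * pd1 f p|) (μ.prod volume)).integral_prod_right
  have hAint : Integrable A (volume : Measure ℝ) := i1.add (i2.const_mul 2)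
  have hBint : Integrable B μ :=
    (hgg2.abs : Integrable (fun p : ℝ × ℝ => |g p * pd2 g p|) (μ.prod volume)).integral_prod_left
  -- values of the integrals of A and B
  have hintA : ∫ y, A y = (∫ p, f p ^ 2 ∂μΩ) + 2 * ∫ p, |f p * pd1 f p| ∂μΩ := by
    show ∫ y, A y = (∫ p, f p ^ 2 ∂(μ.prod volume)) + 2 * ∫ p, |f p * pd1 f p| ∂(μ.prod volume)
    rw [integral_prod_symm _ (hf2 : Integrable (fun p : ℝ × ℝ => f p ^ 2) (μ.prod volume)),
      integral_prod_symm _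
        (hff1.abs : Integrable (fun p : ℝ × ℝ => |f p * pd1 f p|) (μ.prod volume)),
      ← integral_const_mul 2, ← integral_add i1 (i2.const_mul 2)]
  have hintB : ∫ x, B x ∂μ = ∫ p, |g p * pd2 g p| ∂μΩ := by
    show ∫ x, B x ∂μ = ∫ p, |g p * pd2 g p| ∂(μ.prod volume)
    rw [integral_prod _ (hgg2.abs : Integrable (fun p : ℝ × ℝ => |g p * pd2 g p|) (μ.prod volume))]
  have hintA0 : 0 ≤ ∫ y, A y := integral_nonneg hA0
  have hintB0 : 0 ≤ ∫ x, B x ∂μ := integral_nonneg hB0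
  -- Hölder bounds on the cross terms
  have Hff1 : ∫ p, |f p * pd1 f p| ∂μΩ ≤ Nf * Nf1 := holder2 hf hf1
  have Hgg2 : ∫ p, |g p * pd2 g p| ∂μΩ ≤ Ng * Ng2 := holder2 hg hg2
  have If : ∫ p, f p ^ 2 ∂μΩ = Nf ^ 2 := integral_sq_eq hf
  have Ih : ∫ p, h p ^ 2 ∂μΩ = Nh ^ 2 := integral_sq_eq hh
  -- the majorant u
  set u : ℝ × ℝ → ℝ := fun p => Real.sqrt ((2 * B p.1) * A p.2) with hudef
  have hABint : Integrable (fun p : ℝ × ℝ => (2 * B p.1) * A p.2) μΩ := by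
    have := (hBint.const_mul 2).mul_prod hAint
    exact this
  have husq : ∀ p : ℝ × ℝ, u p ^ 2 = (2 * B p.1) * A p.2 := fun p =>
    Real.sq_sqrt (mul_nonneg (mul_nonneg zero_le_two (hB0 _)) (hA0 _))
  have humeas : AEStronglyMeasurable u μΩ :=
    Real.continuous_sqrt.comp_aestronglyMeasurable hABint.1
  have huL2 : MemLp u 2 μΩ := by
    refine (memLp_two_iff_integrable_sq humeas).2 ?_
    exact hABint.congr (ae_of_all _ fun p => (husq p).symm)
  have hhabs : MemLp (fun p => |h p|) 2 μΩ := by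
    simpa [Real.norm_eq_abs] using hh.norm
  -- step 1: pass to absolute values
  have step1 : |∫ p, f p * g p * h p ∂μΩ| ≤ ∫ p, |f p * g p * h p| ∂μΩ := by
    simpa only [Real.norm_eq_abs] using
      norm_integral_le_integral_norm (μ := μΩ) (fun p => f p * g p * h p)
  -- step 2: pointwise domination
  have huh : Integrable (fun p => u p * |h p|) μΩ := integrable_mul_L2 huL2 hhabs
  have step2 : ∫ p, |f p * g p * h p| ∂μΩ ≤ ∫ p, u p * |h p| ∂μΩ := by
    refine integral_mono_of_nonneg (ae_of_all _ fun p => abs_nonneg _) huh ?_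
    filter_upwards [hfae, hgae] with p h1 h2
    have hfp : |f p| ≤ Real.sqrt (A p.2) := by
      rw [← Real.sqrt_sq_eq_abs]; exact Real.sqrt_le_sqrt h1
    have hgp : |g p| ≤ Real.sqrt (2 * B p.1) := by
      rw [← Real.sqrt_sq_eq_abs]; exact Real.sqrt_le_sqrt h2
    calc |f p * g p * h p| = |g p| * |f p| * |h p| := by
          rw [abs_mul, abs_mul]; ring
      _ ≤ Real.sqrt (2 * B p.1) * Real.sqrt (A p.2) * |h p| := by
          have := mul_le_mul hgp hfp (abs_nonneg _) (Real.sqrt_nonneg _)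
          exact mul_le_mul_of_nonneg_right this (abs_nonneg _)
      _ = u p * |h p| := by rw [← Real.sqrt_mul (mul_nonneg zero_le_two (hB0 _))]
  -- step 3: Cauchy-Schwarz
  have hpq : Real.HolderConjugate 2 2 := Real.HolderConjugate.two_two
  have h2e : ENNReal.ofReal (2:ℝ) = 2 := by norm_num
  have H := integral_mul_le_Lp_mul_Lq_of_nonneg (μ := μΩ) hpq
      (ae_of_all _ fun p => Real.sqrt_nonneg _) (ae_of_all _ fun p => abs_nonneg (h p))
      (h2e ▸ huL2) (h2e ▸ hhabs)
  have hu2 : ∫ p, u p ^ (2:ℝ) ∂μΩ = (∫ x, 2 * B x ∂μ) * ∫ y, A y := by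
    have e : ∫ p, u p ^ (2:ℝ) ∂μΩ = ∫ p, (2 * B p.1) * A p.2 ∂μΩ := by
      refine integral_congr_ae (ae_of_all _ fun p => ?_)
      simp only [rpow_two']
      exact husq p
    rw [e]
    show (∫ p, (2 * B p.1) * A p.2 ∂(μ.prod volume)) = _
    exact integral_prod_mul (μ := μ) (ν := volume) (fun x => 2 * B x) A
  have hh2' : ∫ p, |h p| ^ (2:ℝ) ∂μΩ = Nh ^ 2 := by
    rw [← Ih]
    refine integral_congr_ae (ae_of_all _ fun p => ?_)
    simp [rpow_two', sq_abs]
  rw [hu2, hh2'] at H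
  have hNh12 : (Nh ^ 2) ^ (1/2 : ℝ) = Nh := by
    rw [← Real.rpow_natCast Nh 2, ← Real.rpow_mul hNh0]
    norm_num
  rw [hNh12] at H
  -- step 4: bound the product of integrals
  have hT : (∫ x, 2 * B x ∂μ) * ∫ y, A y ≤ 4 * (Nf * (Nf + Nf1)) * (Ng * Ng2) := by
    have e2B : ∫ x, 2 * B x ∂μ = 2 * ∫ x, B x ∂μ := integral_const_mul 2 _
    rw [e2B, hintA, hintB, If]
    nlinarith [hNf0, hNf10, hNg0, hNg20, Hff1, Hgg2, hintB0,
      mul_nonneg hNf0 hNf10, mul_nonneg hNg0 hNg20, sq_nonneg Nf]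
  have hT0 : 0 ≤ (∫ x, 2 * B x ∂μ) * ∫ y, A y := by
    have e2B : ∫ x, 2 * B x ∂μ = 2 * ∫ x, B x ∂μ := integral_const_mul 2 _
    rw [e2B]
    exact mul_nonneg (by linarith) hintA0
  have step4 : ((∫ x, 2 * B x ∂μ) * ∫ y, A y) ^ (1/2 : ℝ) ≤
      (4 * (Nf * (Nf + Nf1)) * (Ng * Ng2)) ^ (1/2 : ℝ) :=
    Real.rpow_le_rpow hT0 hT (by norm_num)
  have hsplit : (4 * (Nf * (Nf + Nf1)) * (Ng * Ng2)) ^ (1/2 : ℝ) =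
      2 * Nf ^ (1/2 : ℝ) * (Nf + Nf1) ^ (1/2 : ℝ) * Ng ^ (1/2 : ℝ) * Ng2 ^ (1/2 : ℝ) := by
    rw [Real.mul_rpow (by positivity) (mul_nonneg hNg0 hNg20),
      Real.mul_rpow (by norm_num) (mul_nonneg hNf0 (by linarith)),
      Real.mul_rpow hNf0 (by linarith), Real.mul_rpow hNg0 hNg20,
      show (4:ℝ) ^ (1/2 : ℝ) = 2 by
        rw [show (4:ℝ) = 2 ^ (2:ℕ) by norm_num, ← Real.rpow_natCast 2 2,
          ← Real.rpow_mul (by norm_num)]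
        norm_num]
    ring
  calc |∫ p, f p * g p * h p ∂μΩ| ≤ ∫ p, u p * |h p| ∂μΩ := step1.trans step2
    _ ≤ ((∫ x, 2 * B x ∂μ) * ∫ y, A y) ^ (1/2 : ℝ) * Nh := H
    _ ≤ (4 * (Nf * (Nf + Nf1)) * (Ng * Ng2)) ^ (1/2 : ℝ) * Nh :=
        mul_le_mul_of_nonneg_right step4 hNh0
    _ = 2 * Nf ^ (1/2 : ℝ) * (Nf + Nf1) ^ (1/2 : ℝ) * Ng ^ (1/2 : ℝ) * Ng2 ^ (1/2 : ℝ) * Nh := by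
        rw [hsplit]
end

section
/- There is a constant C > 0 such that for any f ∈ H²(𝕋 × ℝ), ‖f‖_{L^∞(Ω)} ≤ C ‖f‖_{L²}^{1/4} (‖f‖_{L²} + ‖∂₁f‖_{L²})^{1/4} ‖∂₂f‖_{L²}^{1/4} (‖∂₂f‖_{L²} + ‖∂₁∂₂f‖_{L²})^{1/4}. -/
open MeasureTheory Real

open scoped ENNReal
set_option maxHeartbeats 1000000

lemma hasDerivAt_pd1 {g : ℝ × ℝ → ℝ} (hg : Differentiable ℝ g) (x y : ℝ) :
    HasDerivAt (fun s => g (s, y)) (pd1 g (x, y)) x := by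
  have h : DifferentiableAt ℝ (fun s : ℝ => g (s, y)) x :=
    (hg (x, y)).comp x (differentiableAt_id.prodMk (differentiableAt_const y))
  exact h.hasDerivAt

lemma hasDerivAt_pd2 {g : ℝ × ℝ → ℝ} (hg : Differentiable ℝ g) (x y : ℝ) :
    HasDerivAt (fun t => g (x, t)) (pd2 g (x, y)) y := by
  have h : DifferentiableAt ℝ (fun t : ℝ => g (x, t)) y :=
    (hg (x, y)).comp y ((differentiableAt_const x).prodMk differentiableAt_id)
  exact h.hasDerivAt

lemma pd1_eq {g : ℝ × ℝ → ℝ} (hg : Differentiable ℝ g) (p : ℝ × ℝ) :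
    pd1 g p = fderiv ℝ g p ((1:ℝ), (0:ℝ)) := by
  have h1 : HasDerivAt (fun s : ℝ => (s, p.2)) ((1:ℝ), (0:ℝ)) p.1 :=
    (hasDerivAt_id p.1).prodMk (hasDerivAt_const p.1 p.2)
  have h2 : HasDerivAt (fun s : ℝ => g (s, p.2)) (fderiv ℝ g p ((1:ℝ), (0:ℝ))) p.1 := by
    have := (hg p).hasFDerivAt.comp_hasDerivAt p.1 (by simpa using h1)
    simpa [Function.comp_def] using this
  exact h2.deriv

lemma pd2_eq {g : ℝ × ℝ → ℝ} (hg : Differentiable ℝ g) (p : ℝ × ℝ) :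
    pd2 g p = fderiv ℝ g p ((0:ℝ), (1:ℝ)) := by
  have h1 : HasDerivAt (fun t : ℝ => (p.1, t)) ((0:ℝ), (1:ℝ)) p.2 :=
    (hasDerivAt_const p.2 p.1).prodMk (hasDerivAt_id p.2)
  have h2 : HasDerivAt (fun t : ℝ => g (p.1, t)) (fderiv ℝ g p ((0:ℝ), (1:ℝ))) p.2 := by
    have := (hg p).hasFDerivAt.comp_hasDerivAt p.2 (by simpa using h1)
    simpa [Function.comp_def] using this
  exact h2.deriv

lemma continuous_pd1 {g : ℝ × ℝ → ℝ} (hg : ContDiff ℝ 1 g) : Continuous (pd1 g) := by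
  have h : pd1 g = fun p => fderiv ℝ g p ((1:ℝ), (0:ℝ)) :=
    funext (pd1_eq (hg.differentiable (by norm_num)))
  rw [h]
  exact (hg.continuous_fderiv (by norm_num)).clm_apply continuous_const

lemma continuous_pd2 {g : ℝ × ℝ → ℝ} (hg : ContDiff ℝ 1 g) : Continuous (pd2 g) := by
  have h : pd2 g = fun p => fderiv ℝ g p ((0:ℝ), (1:ℝ)) :=
    funext (pd2_eq (hg.differentiable (by norm_num)))
  rw [h]
  exact (hg.continuous_fderiv (by norm_num)).clm_apply continuous_const

lemma contDiff_pd2 {g : ℝ × ℝ → ℝ} (hg : ContDiff ℝ 2 g) : ContDiff ℝ 1 (pd2 g) := by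
  have h : pd2 g = fun p => fderiv ℝ g p ((0:ℝ), (1:ℝ)) :=
    funext (pd2_eq (hg.differentiable (by norm_num)))
  rw [h]
  exact (hg.fderiv_right (by norm_num)).clm_apply contDiff_const

lemma sq_eLpNorm {α : Type*} [MeasurableSpace α] {μ : Measure α} {f : α → ℝ}
    (hf : MemLp f 2 μ) :
    (eLpNorm f 2 μ).toReal ^ 2 = ∫ a, f a ^ 2 ∂μ := by
  set F : Lp ℝ 2 μ := hf.toLp f with hF
  have h1 : (inner ℝ F F : ℝ) = ‖F‖ ^ 2 := real_inner_self_eq_norm_sq F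
  have h2 : (inner ℝ F F : ℝ) = ∫ a, F a * F a ∂μ := by
    rw [L2.inner_def]
    exact integral_congr_ae (Filter.Eventually.of_forall fun a => by
      first | rfl | simp [RCLike.inner_apply, starRingEnd_apply])
  have h3 : ∫ a, F a * F a ∂μ = ∫ a, f a ^ 2 ∂μ := by
    refine integral_congr_ae ?_
    filter_upwards [hf.coeFn_toLp] with a ha
    rw [← hF] at ha
    rw [ha]; ring
  have h4 : ‖F‖ = (eLpNorm f 2 μ).toReal := Lp.norm_toLp f hf
  rw [← h4, ← h1, h2, h3]

lemma cs_integral {α : Type*} [MeasurableSpace α] {μ : Measure α} {f g : α → ℝ}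
    (hf : MemLp f 2 μ) (hg : MemLp g 2 μ) :
    ∫ a, |f a * g a| ∂μ ≤ (eLpNorm f 2 μ).toReal * (eLpNorm g 2 μ).toReal := by
  have hfa : MemLp (fun a => |f a|) 2 μ := by simpa [Real.norm_eq_abs] using hf.norm
  have hga : MemLp (fun a => |g a|) 2 μ := by simpa [Real.norm_eq_abs] using hg.norm
  set F : Lp ℝ 2 μ := hfa.toLp _ with hF
  set G : Lp ℝ 2 μ := hga.toLp _ with hG
  have h1 : (inner ℝ F G : ℝ) ≤ ‖F‖ * ‖G‖ := real_inner_le_norm F G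
  have h2 : (inner ℝ F G : ℝ) = ∫ a, F a * G a ∂μ := by
    rw [L2.inner_def]
    exact integral_congr_ae (Filter.Eventually.of_forall fun a => by
      first | rfl | simp [RCLike.inner_apply, starRingEnd_apply, mul_comm])
  have h3 : ∫ a, F a * G a ∂μ = ∫ a, |f a * g a| ∂μ := by
    refine integral_congr_ae ?_
    filter_upwards [hfa.coeFn_toLp, hga.coeFn_toLp] with a ha hb
    rw [← hF] at ha; rw [← hG] at hb
    rw [ha, hb, abs_mul]
  have h4 : ‖F‖ = (eLpNorm f 2 μ).toReal := by
    rw [Lp.norm_toLp]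
    congr 1
    simpa [Real.norm_eq_abs] using eLpNorm_norm (p := (2:ℝ≥0∞)) (μ := μ) f
  have h5 : ‖G‖ = (eLpNorm g 2 μ).toReal := by
    rw [Lp.norm_toLp]
    congr 1
    simpa [Real.norm_eq_abs] using eLpNorm_norm (p := (2:ℝ≥0∞)) (μ := μ) g
  calc ∫ a, |f a * g a| ∂μ = (inner ℝ F G : ℝ) := by rw [h2, h3]
    _ ≤ ‖F‖ * ‖G‖ := h1
    _ = _ := by rw [h4, h5]

lemma prod_restrict_eq {I : Set ℝ} (hIm : MeasurableSet I) (hI : I ⊆ Set.Ioc (0:ℝ) 1) :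
    ((volume : Measure ℝ).restrict I).prod (volume : Measure ℝ)
      = μΩ.restrict (I ×ˢ (Set.univ : Set ℝ)) := by
  have h1 : ((volume : Measure ℝ).restrict I).prod (volume : Measure ℝ)
      = ((volume : Measure ℝ).prod (volume : Measure ℝ)).restrict (I ×ˢ Set.univ) := by
    rw [← Measure.prod_restrict, Measure.restrict_univ]
  have h2 : μΩ = ((volume : Measure ℝ).prod (volume : Measure ℝ)).restrict
      (Set.Ioc (0:ℝ) 1 ×ˢ Set.univ) := by
    rw [μΩ, ← Measure.prod_restrict, Measure.restrict_univ]
  rw [h1, h2, Measure.restrict_restrict (hIm.prod MeasurableSet.univ),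
    Set.prod_inter_prod, Set.inter_eq_self_of_subset_left hI, Set.univ_inter]

lemma ae_mem_strip : ∀ᵐ p ∂μΩ, p.1 ∈ Set.Ioc (0:ℝ) 1 := by
  have h : μΩ = μΩ.restrict (Set.Ioc (0:ℝ) 1 ×ˢ (Set.univ : Set ℝ)) :=
    prod_restrict_eq measurableSet_Ioc subset_rfl
  nth_rewrite 1 [h]
  filter_upwards [ae_restrict_mem (measurableSet_Ioc.prod MeasurableSet.univ)] with p hp
  exact hp.1

lemma xdir {g : ℝ × ℝ → ℝ} (hg : ContDiff ℝ 1 g)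
    (hg2 : MemLp g 2 μΩ) (hg1 : MemLp (pd1 g) 2 μΩ) :
    ∀ x ∈ Set.Ioc (0:ℝ) 1, Integrable (fun y => g (x, y) ^ 2) volume ∧
      ∫ y, g (x, y) ^ 2 ≤ (eLpNorm g 2 μΩ).toReal ^ 2 +
        2 * (eLpNorm g 2 μΩ).toReal * (eLpNorm (pd1 g) 2 μΩ).toReal := by
  set A := (eLpNorm g 2 μΩ).toReal with hA
  set B := (eLpNorm (pd1 g) 2 μΩ).toReal with hB
  set ν := (volume : Measure ℝ).restrict (Set.Ioc (0:ℝ) 1) with hν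
  have hGsq : Integrable (fun p => g p ^ 2) μΩ := hg2.integrable_sq
  have hIF : ∫ p, g p ^ 2 ∂μΩ = A ^ 2 := (sq_eLpNorm hg2).symm
  have hνuniv : ν Set.univ = 1 := by
    rw [hν, Measure.restrict_apply_univ, Real.volume_Ioc]
    norm_num
  haveI : IsFiniteMeasure ν := ⟨by rw [hνuniv]; exact ENNReal.one_lt_top⟩
  -- a good base slice x'
  have key : ∃ x', x' ∈ Set.Ioc (0:ℝ) 1 ∧ Integrable (fun y => g (x', y) ^ 2) volume ∧
      ∫ y, g (x', y) ^ 2 ≤ A ^ 2 := by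
    by_contra hcon
    push_neg at hcon
    have hslice : ∀ᵐ x ∂ν, Integrable (fun y => g (x, y) ^ 2) volume :=
      hGsq.prod_right_ae
    have hmem : ∀ᵐ x ∂ν, x ∈ Set.Ioc (0:ℝ) 1 := ae_restrict_mem measurableSet_Ioc
    have hae : ∀ᵐ x ∂ν, A ^ 2 < ∫ y, g (x, y) ^ 2 := by
      filter_upwards [hslice, hmem] with x h1 h2
      exact hcon x h2 h1
    have hw : Integrable (fun x => ∫ y, g (x, y) ^ 2) ν := hGsq.integral_prod_left
    have hwint : ∫ x, (∫ y, g (x, y) ^ 2) ∂ν = ∫ p, g p ^ 2 ∂μΩ :=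
      (integral_prod _ hGsq).symm
    have hconst : ∫ _ : ℝ, A ^ 2 ∂ν = A ^ 2 := by
      rw [integral_const, measureReal_def, hνuniv]; simp
    have hzero : ∫ x, ((∫ y, g (x, y) ^ 2) - A ^ 2) ∂ν = 0 := by
      rw [integral_sub hw (integrable_const _), hwint, hIF, hconst, sub_self]
    have hnonneg : 0 ≤ᵐ[ν] fun x => (∫ y, g (x, y) ^ 2) - A ^ 2 := by
      filter_upwards [hae] with x hx
      simp only [Pi.zero_apply]
      linarith
    have heq := (integral_eq_zero_iff_of_nonneg_ae hnonneg (hw.sub (integrable_const _))).mp hzero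
    have hνne : ν ≠ 0 := by
      intro h0
      rw [h0] at hνuniv
      simp at hνuniv
    haveI : (ae ν).NeBot := ae_neBot.mpr hνne
    obtain ⟨x, hx1, hx2⟩ := (hae.and heq).exists
    have hx2' : (∫ (y : ℝ), g (x, y) ^ 2) - A ^ 2 = 0 := hx2
    linarith
  obtain ⟨x', hx'mem, hx'int, hx'le⟩ := key
  intro x hx
  set G : ℝ × ℝ → ℝ := fun p => 2 * g p * pd1 g p with hGdef
  have hGcont : Continuous G := (continuous_const.mul hg.continuous).mul (continuous_pd1 hg)
  have hGint : Integrable G μΩ := by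
    refine (hg2.integrable_sq.add hg1.integrable_sq).mono' hGcont.aestronglyMeasurable
      (Filter.Eventually.of_forall fun p => ?_)
    rw [Real.norm_eq_abs]
    simp only [Pi.add_apply]
    have h1 : |G p| = 2 * |g p| * |pd1 g p| := by
      rw [hGdef]; simp [abs_mul]
    nlinarith [sq_nonneg (|g p| - |pd1 g p|), sq_abs (g p), sq_abs (pd1 g p)]
  set I := Set.uIoc x' x with hIdef
  have hIsub : I ⊆ Set.Ioc (0:ℝ) 1 := by
    rw [hIdef, Set.uIoc]
    exact Set.Ioc_subset_Ioc (le_inf hx'mem.1.le hx.1.le) (sup_le hx'mem.2 hx.2)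
  have hμ₂ : ((volume : Measure ℝ).restrict I).prod (volume : Measure ℝ)
      = μΩ.restrict (I ×ˢ (Set.univ : Set ℝ)) := prod_restrict_eq measurableSet_uIoc hIsub
  have hG2 : Integrable G (((volume : Measure ℝ).restrict I).prod (volume : Measure ℝ)) := by
    rw [hμ₂]; exact hGint.restrict
  have hG2abs : Integrable (fun p => |G p|)
      (((volume : Measure ℝ).restrict I).prod (volume : Measure ℝ)) := hG2.abs
  -- FTC in the x-direction
  have hftc : ∀ y : ℝ, g (x, y) ^ 2 - g (x', y) ^ 2 = ∫ s in x'..x, G (s, y) := by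
    intro y
    have hder : ∀ s ∈ Set.uIcc x' x, HasDerivAt (fun s => g (s, y) ^ 2) (G (s, y)) s := by
      intro s _
      have h := (hasDerivAt_pd1 (hg.differentiable (by norm_num)) s y).pow 2
      simpa [Pi.pow_def, hGdef, mul_comm, mul_assoc, mul_left_comm] using h
    have hcont : Continuous (fun s => G (s, y)) :=
      hGcont.comp (continuous_id.prodMk continuous_const)
    rw [intervalIntegral.integral_eq_sub_of_hasDerivAt hder (hcont.intervalIntegrable _ _)]
  have hpt : ∀ y : ℝ, g (x, y) ^ 2 ≤ g (x', y) ^ 2 + ∫ s in I, |G (s, y)| := by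
    intro y
    have h2 : |∫ s in x'..x, G (s, y)| ≤ ∫ s in I, |G (s, y)| := by
      simpa [Real.norm_eq_abs, hIdef] using
        intervalIntegral.norm_integral_le_integral_norm_uIoc
          (f := fun s => G (s, y)) (a := x') (b := x) (μ := volume)
    have h1 := hftc y
    have h3 := le_abs_self (∫ s in x'..x, G (s, y))
    linarith
  set H : ℝ → ℝ := fun y => ∫ s in I, |G (s, y)| with hHdef
  have hHint : Integrable H volume := hG2abs.integral_prod_right
  have hHsum : ∫ y, H y ≤ 2 * A * B := by
    have h1 : ∫ y, H y
        = ∫ p, |G p| ∂(((volume : Measure ℝ).restrict I).prod (volume : Measure ℝ)) := by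
      rw [integral_prod _ hG2abs]
      exact (integral_integral_swap hG2abs).symm
    have h2 : ∫ p in I ×ˢ (Set.univ : Set ℝ), |G p| ∂μΩ ≤ ∫ p, |G p| ∂μΩ :=
      setIntegral_le_integral hGint.abs (Filter.Eventually.of_forall fun p => abs_nonneg _)
    have h3 : ∫ p, |G p| ∂μΩ ≤ 2 * (A * B) := by
      have he : ∀ p : ℝ × ℝ, |G p| = 2 * |g p * pd1 g p| := by
        intro p
        rw [hGdef]
        simp [abs_mul, mul_assoc]
      calc ∫ p, |G p| ∂μΩ = ∫ p, 2 * |g p * pd1 g p| ∂μΩ := by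
            exact integral_congr_ae (Filter.Eventually.of_forall he)
        _ = 2 * ∫ p, |g p * pd1 g p| ∂μΩ := integral_const_mul 2 _
        _ ≤ 2 * (A * B) := by
            have := cs_integral hg2 hg1
            linarith
    rw [hμ₂] at h1
    rw [h1]
    exact le_trans h2 (by linarith)
  have hxint : Integrable (fun y => g (x, y) ^ 2) volume := by
    refine (hx'int.add hHint).mono' ?_ (Filter.Eventually.of_forall fun y => ?_)
    · exact ((hg.continuous.comp (continuous_const.prodMk continuous_id)).pow 2).aestronglyMeasurable
    · rw [Real.norm_eq_abs, abs_of_nonneg (sq_nonneg _)]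
      exact hpt y
  refine ⟨hxint, ?_⟩
  have hsum_int : Integrable (fun y => g (x', y) ^ 2 + H y) volume := by
    exact hx'int.add hHint
  have hmono := integral_mono hxint hsum_int hpt
  rw [integral_add hx'int hHint] at hmono
  have h2AB : 2 * A * B = 2 * (A * B) := by ring
  linarith

lemma oneD {φ ψ : ℝ → ℝ} (hd : ∀ t, HasDerivAt φ (ψ t) t) (hψ : Continuous ψ)
    (hφ2 : Integrable (fun t => φ t ^ 2) volume)
    (hφψ : Integrable (fun t => |φ t * ψ t|) volume) (y : ℝ) :
    φ y ^ 2 ≤ 2 * ∫ t, |φ t * ψ t| := by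
  have hφc : Continuous φ := by
    refine continuous_iff_continuousAt.mpr fun t => (hd t).differentiableAt.continuousAt
  set T := 2 * ∫ t, |φ t * ψ t| with hT
  by_contra hcontra
  push_neg at hcontra
  set δ := φ y ^ 2 - T with hδ
  have hδpos : 0 < δ := by rw [hδ]; linarith
  have hlow : ∀ t : ℝ, δ ≤ φ t ^ 2 := by
    intro t
    have hftc : φ t ^ 2 - φ y ^ 2 = ∫ s in y..t, 2 * φ s * ψ s := by
      have hder : ∀ s ∈ Set.uIcc y t, HasDerivAt (fun s => φ s ^ 2) (2 * φ s * ψ s) s := by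
        intro s _
        have h := (hd s).pow 2
        simpa [Pi.pow_def, mul_comm, mul_assoc, mul_left_comm] using h
      rw [intervalIntegral.integral_eq_sub_of_hasDerivAt hder
        (((continuous_const.mul hφc).mul hψ).intervalIntegrable _ _)]
    have habs : |∫ s in y..t, 2 * φ s * ψ s| ≤ ∫ s in Set.uIoc y t, |2 * φ s * ψ s| := by
      simpa only [Real.norm_eq_abs] using
        intervalIntegral.norm_integral_le_integral_norm_uIoc
          (f := fun s => 2 * φ s * ψ s) (a := y) (b := t) (μ := volume)
    have h2 : ∫ s in Set.uIoc y t, |2 * φ s * ψ s| ≤ T := by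
      have he : ∀ s : ℝ, |2 * φ s * ψ s| = 2 * |φ s * ψ s| := by
        intro s
        rw [mul_assoc, abs_mul]
        simp
      calc ∫ s in Set.uIoc y t, |2 * φ s * ψ s|
          = ∫ s in Set.uIoc y t, 2 * |φ s * ψ s| := by
            exact setIntegral_congr_fun measurableSet_uIoc fun s _ => he s
        _ = 2 * ∫ s in Set.uIoc y t, |φ s * ψ s| := integral_const_mul 2 _
        _ ≤ 2 * ∫ s, |φ s * ψ s| := by
            have := setIntegral_le_integral (s := Set.uIoc y t) hφψ
              (Filter.Eventually.of_forall fun s => abs_nonneg _)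
            linarith
        _ = T := hT.symm
    have h3 := neg_abs_le (∫ s in y..t, 2 * φ s * ψ s)
    rw [hδ]
    linarith
  obtain ⟨N, hN⟩ := exists_nat_gt ((∫ t, φ t ^ 2) / δ)
  have hint : δ * N ≤ ∫ t, φ t ^ 2 := by
    have h1 : ∫ t in Set.Ioc y (y + N), φ t ^ 2 ≤ ∫ t, φ t ^ 2 :=
      setIntegral_le_integral hφ2 (Filter.Eventually.of_forall fun t => sq_nonneg _)
    have h3 : ∫ _ in Set.Ioc y (y + N), δ ≤ ∫ t in Set.Ioc y (y + N), φ t ^ 2 := by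
      refine setIntegral_mono_on ?_ hφ2.integrableOn measurableSet_Ioc fun t _ => hlow t
      exact integrableOn_const measure_Ioc_lt_top.ne
    have h4 : ∫ _ in Set.Ioc y (y + N), δ = δ * N := by
      rw [setIntegral_const]
      rw [Real.volume_real_Ioc_of_le (by simp)]
      simp [mul_comm]
    linarith
  have h5 : (∫ t, φ t ^ 2) < N * δ := (div_lt_iff₀ hδpos).mp hN
  nlinarith

/-- Anisotropic `L^∞` bound: for `f ∈ H²(𝕋 × ℝ)`,
`‖f‖_{L^∞} ≤ C ‖f‖^{1/4} (‖f‖+‖∂₁f‖)^{1/4} ‖∂₂f‖^{1/4} (‖∂₂f‖+‖∂₁∂₂f‖)^{1/4}`. -/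
theorem stmt8 : ∃ C : ℝ, 0 < C ∧ ∀ f : ℝ × ℝ → ℝ,
    Per f → ContDiff ℝ 2 f →
    MemLp f 2 μΩ → MemLp (pd1 f) 2 μΩ → MemLp (pd2 f) 2 μΩ →
    MemLp (pd1 (pd2 f)) 2 μΩ →
    eLpNorm f ⊤ μΩ ≤ ENNReal.ofReal
      (C * (eLpNorm f 2 μΩ).toReal ^ (1/4 : ℝ) *
        ((eLpNorm f 2 μΩ).toReal + (eLpNorm (pd1 f) 2 μΩ).toReal) ^ (1/4 : ℝ) *
        (eLpNorm (pd2 f) 2 μΩ).toReal ^ (1/4 : ℝ) *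
        ((eLpNorm (pd2 f) 2 μΩ).toReal + (eLpNorm (pd1 (pd2 f)) 2 μΩ).toReal) ^ (1/4 : ℝ)) := by
  refine ⟨2, by norm_num, ?_⟩
  intro f _hPer hf hf2 hpd1 hpd2f hpd12
  set A := (eLpNorm f 2 μΩ).toReal with hAdef
  set B := (eLpNorm (pd1 f) 2 μΩ).toReal with hBdef
  set C := (eLpNorm (pd2 f) 2 μΩ).toReal with hCdef
  set D := (eLpNorm (pd1 (pd2 f)) 2 μΩ).toReal with hDdef
  have hA0 : 0 ≤ A := ENNReal.toReal_nonneg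
  have hB0 : 0 ≤ B := ENNReal.toReal_nonneg
  have hC0 : 0 ≤ C := ENNReal.toReal_nonneg
  have hD0 : 0 ≤ D := ENNReal.toReal_nonneg
  set M := 2 * A ^ (1/4 : ℝ) * (A + B) ^ (1/4 : ℝ) * C ^ (1/4 : ℝ) * (C + D) ^ (1/4 : ℝ) with hMdef
  have hM0 : 0 ≤ M := by
    rw [hMdef]
    have := Real.rpow_nonneg hA0 (1/4 : ℝ)
    have := Real.rpow_nonneg (add_nonneg hA0 hB0) (1/4 : ℝ)
    have := Real.rpow_nonneg hC0 (1/4 : ℝ)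
    have := Real.rpow_nonneg (add_nonneg hC0 hD0) (1/4 : ℝ)
    positivity
  have e4 : ∀ z : ℝ, 0 ≤ z → (z ^ (1/4 : ℝ)) ^ (4 : ℕ) = z := by
    intro z hz
    rw [show (1/4 : ℝ) = (((4 : ℕ) : ℝ))⁻¹ by norm_num]
    exact Real.rpow_inv_natCast_pow hz (by norm_num)
  have hM4 : M ^ (4 : ℕ) = 16 * (A * (A + B) * (C * (C + D))) := by
    have e1 := e4 A hA0
    have e2 := e4 (A + B) (add_nonneg hA0 hB0)
    have e3 := e4 C hC0
    have e5 := e4 (C + D) (add_nonneg hC0 hD0)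
    calc M ^ (4:ℕ) = 2 ^ (4:ℕ) * (A ^ (1/4:ℝ)) ^ (4:ℕ) * ((A+B) ^ (1/4:ℝ)) ^ (4:ℕ)
          * (C ^ (1/4:ℝ)) ^ (4:ℕ) * ((C+D) ^ (1/4:ℝ)) ^ (4:ℕ) := by rw [hMdef]; ring
      _ = 16 * (A * (A + B) * (C * (C + D))) := by rw [e1, e2, e3, e5]; norm_num; ring
  have hdiff : Differentiable ℝ f := hf.differentiable (by norm_num)
  have hx1 := xdir (hf.of_le (by norm_num)) hf2 hpd1
  have hx2 := xdir (contDiff_pd2 hf) hpd2f hpd12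
  -- pointwise bound on the strip
  have hbound : ∀ x ∈ Set.Ioc (0:ℝ) 1, ∀ y : ℝ, |f (x, y)| ≤ M := by
    intro x hx y
    obtain ⟨hint1, hle1⟩ := hx1 x hx
    obtain ⟨hint2, hle2⟩ := hx2 x hx
    set φ : ℝ → ℝ := fun t => f (x, t) with hφdef
    set ψ : ℝ → ℝ := fun t => pd2 f (x, t) with hψdef
    have hφc : Continuous φ := hf.continuous.comp (continuous_const.prodMk continuous_id)
    have hψc : Continuous ψ :=
      (contDiff_pd2 hf).continuous.comp (continuous_const.prodMk continuous_id)
    have hd : ∀ t, HasDerivAt φ (ψ t) t := fun t => hasDerivAt_pd2 hdiff x t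
    have hφψ : Integrable (fun t => |φ t * ψ t|) volume := by
      have hsum : Integrable (fun t => (φ t ^ 2 + ψ t ^ 2) / 2) volume := by
        exact (hint1.add hint2).div_const 2
      refine hsum.mono' ((hφc.mul hψc).abs).aestronglyMeasurable
        (Filter.Eventually.of_forall fun t => ?_)
      rw [Real.norm_eq_abs, abs_abs]
      nlinarith [abs_mul (φ t) (ψ t), sq_nonneg (|φ t| - |ψ t|), sq_abs (φ t), sq_abs (ψ t),
        abs_nonneg (φ t), abs_nonneg (ψ t)]
    have key1 : φ y ^ 2 ≤ 2 * ∫ t, |φ t * ψ t| := oneD hd hψc hint1 hφψ y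
    have hmemφ : MemLp φ 2 (volume : Measure ℝ) :=
      (memLp_two_iff_integrable_sq hφc.aestronglyMeasurable).mpr hint1
    have hmemψ : MemLp ψ 2 (volume : Measure ℝ) :=
      (memLp_two_iff_integrable_sq hψc.aestronglyMeasurable).mpr hint2
    set nφ := (eLpNorm φ 2 (volume : Measure ℝ)).toReal with hnφdef
    set nψ := (eLpNorm ψ 2 (volume : Measure ℝ)).toReal with hnψdef
    have hnφ0 : 0 ≤ nφ := ENNReal.toReal_nonneg
    have hnψ0 : 0 ≤ nψ := ENNReal.toReal_nonneg
    have cs1 : ∫ t, |φ t * ψ t| ≤ nφ * nψ := cs_integral hmemφ hmemψ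
    have hle1' : ∫ t, φ t ^ 2 ≤ A ^ 2 + 2 * A * B := hle1
    have hle2' : ∫ t, ψ t ^ 2 ≤ C ^ 2 + 2 * C * D := hle2
    have s4 : nφ ^ 2 ≤ 2 * A * (A + B) := by
      have h2 : nφ ^ 2 = ∫ t, φ t ^ 2 := sq_eLpNorm hmemφ
      rw [h2]
      nlinarith [hle1', sq_nonneg A]
    have s5 : nψ ^ 2 ≤ 2 * C * (C + D) := by
      have h2 : nψ ^ 2 = ∫ t, ψ t ^ 2 := sq_eLpNorm hmemψ
      rw [h2]
      nlinarith [hle2', sq_nonneg C]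
    have hAB0 : 0 ≤ 2 * A * (A + B) :=
      mul_nonneg (mul_nonneg (by norm_num) hA0) (add_nonneg hA0 hB0)
    have s1 : φ y ^ 2 ≤ 2 * (nφ * nψ) := by linarith
    have s2 : (φ y ^ 2) ^ 2 ≤ (2 * (nφ * nψ)) ^ 2 :=
      pow_le_pow_left₀ (sq_nonneg _) s1 2
    have m1 : nφ ^ 2 * nψ ^ 2 ≤ (2 * A * (A + B)) * (2 * C * (C + D)) :=
      mul_le_mul s4 s5 (sq_nonneg _) hAB0
    have s3 : (2 * (nφ * nψ)) ^ 2 = 4 * (nφ ^ 2 * nψ ^ 2) := by ring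
    have s7 : (16:ℝ) * (A * (A + B) * (C * (C + D)))
        = 4 * ((2 * A * (A + B)) * (2 * C * (C + D))) := by ring
    have h16 : (φ y ^ 2) ^ 2 ≤ 16 * (A * (A + B) * (C * (C + D))) := by
      rw [s7]
      linarith [s2, m1, s3]
    refine le_of_pow_le_pow_left₀ (n := 4) (by norm_num) hM0 ?_
    have habs : |f (x, y)| ^ (4:ℕ) = (φ y ^ 2) ^ 2 := by
      rw [show (4:ℕ) = 2*2 from rfl, pow_mul, sq_abs]
    rw [habs, hM4]
    exact h16
  have hae : ∀ᵐ p ∂μΩ, ‖f p‖ ≤ M := by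
    filter_upwards [ae_mem_strip] with p hp
    rw [Real.norm_eq_abs]
    exact hbound p.1 hp p.2
  calc eLpNorm f ⊤ μΩ = eLpNormEssSup f μΩ := eLpNorm_exponent_top
    _ ≤ ENNReal.ofReal M := eLpNormEssSup_le_of_ae_bound hae
end

section
/- There is a constant C > 0 such that for any sufficiently regular f on Ω = 𝕋 × ℝ with oscillation f̃ = f − f̄ (where f̄ is the horizontal average), and any g, h with g, ∂₂g, h ∈ L²(Ω), one has |∫_Ω f̃ g h dx| ≤ C ‖f̃‖_{L²}^{1/2} ‖∂₁f̃‖_{L²}^{1/2} ‖g‖_{L²}^{1/2} ‖∂₂g‖_{L²}^{1/2} ‖h‖_{L²}. -/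
set_option maxHeartbeats 1000000

open MeasureTheory Real

open Set Filter
open scoped ENNReal NNReal Topology

lemma exists_zero_of_mean_zero {u : ℝ → ℝ} (hc : Continuous u)
    (hmean : ∫ t in (0:ℝ)..1, u t = 0) : ∃ x₀ ∈ Icc (0:ℝ) 1, u x₀ = 0 := by
  by_contra h
  push_neg at h
  have hiv : ∀ a ∈ Icc (0:ℝ) 1, ∀ b ∈ Icc (0:ℝ) 1, u a < 0 → 0 < u b → False := by
    intro a ha b hb hua hub
    have hsub : uIcc a b ⊆ Icc (0:ℝ) 1 := by
      rw [← uIcc_of_le (zero_le_one' ℝ)]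
      exact uIcc_subset_uIcc (by rwa [uIcc_of_le (zero_le_one' ℝ)])
        (by rwa [uIcc_of_le (zero_le_one' ℝ)])
    have h0 : (0:ℝ) ∈ uIcc (u a) (u b) := by
      rw [mem_uIcc]; left; exact ⟨hua.le, hub.le⟩
    obtain ⟨c, hc1, hc2⟩ := intermediate_value_uIcc (hc.continuousOn) h0
    exact h c (hsub hc1) hc2
  rcases lt_or_gt_of_ne (h 0 ⟨le_refl 0, zero_le_one⟩) with hneg | hpos
  · have hall : ∀ x ∈ Ioo (0:ℝ) 1, u x < 0 := by
      intro x hx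
      rcases (h x ⟨hx.1.le, hx.2.le⟩).lt_or_gt with h' | h'
      · exact h'
      · exact absurd (hiv 0 ⟨le_refl 0, zero_le_one⟩ x ⟨hx.1.le, hx.2.le⟩ hneg h') (fun f => f)
    have : (0:ℝ) < ∫ t in (0:ℝ)..1, (-u) t :=
      intervalIntegral.intervalIntegral_pos_of_pos_on (hc.neg.intervalIntegrable 0 1)
        (fun x hx => neg_pos.2 (hall x hx)) one_pos
    have h2 : ∫ t in (0:ℝ)..1, (-u) t = -∫ t in (0:ℝ)..1, u t := by
      simp [intervalIntegral.integral_neg]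
    rw [h2, hmean] at this
    simp at this
  · have hall : ∀ x ∈ Ioo (0:ℝ) 1, 0 < u x := by
      intro x hx
      rcases (h x ⟨hx.1.le, hx.2.le⟩).lt_or_gt with h' | h'
      · exact absurd (hiv x ⟨hx.1.le, hx.2.le⟩ 0 ⟨le_refl 0, zero_le_one⟩ h' hpos) (fun f => f)
      · exact h'
    have : (0:ℝ) < ∫ t in (0:ℝ)..1, u t :=
      intervalIntegral.intervalIntegral_pos_of_pos_on (hc.intervalIntegrable 0 1) hall one_pos
    rw [hmean] at this
    exact lt_irrefl _ this

lemma agmon_circle {u : ℝ → ℝ} (hu : Differentiable ℝ u) (hper : Function.Periodic u 1)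
    (hmean : ∫ t in (0:ℝ)..1, u t = 0)
    (hint : IntervalIntegrable (fun t => u t * deriv u t) volume 0 1) :
    ∀ x, u x ^ 2 ≤ 2 * ∫ t in (0:ℝ)..1, |u t * deriv u t| := by
  set v : ℝ → ℝ := fun t => u t * deriv u t with hv
  have hderper : Function.Periodic (deriv u) 1 := by
    intro x
    have hueq : (fun t => u (t + 1)) = u := funext fun t => hper t
    calc deriv u (x + 1) = deriv (fun t => u (t + 1)) x := (deriv_comp_add_const u 1 x).symm
    _ = deriv u x := by rw [hueq]
  have hvper : Function.Periodic v 1 := fun x => by simp [hv, hper x, hderper x]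
  have hint2 : IntervalIntegrable v volume 1 2 := by
    have h1 := hint.comp_sub_right 1
    have : (fun x => v (x - 1)) = v := funext fun x => hvper.sub_eq x
    rw [this] at h1
    norm_num at h1
    exact h1
  have hint02 : IntervalIntegrable v volume 0 2 := hint.trans hint2
  obtain ⟨x₀, hx₀, hux₀⟩ := exists_zero_of_mean_zero hu.continuous hmean
  intro x
  set n : ℤ := ⌊x - x₀⌋ with hn
  set x' : ℝ := x - n with hx'
  have hux : u x' = u x := by
    have := hper.sub_zsmul_eq n (x := x)
    simpa [hx'] using this
  have hb1 : x₀ ≤ x' := by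
    have := Int.floor_le (x - x₀)
    simp only [hx', hn] at *
    linarith
  have hb2 : x' ≤ x₀ + 1 := by
    have := Int.lt_floor_add_one (x - x₀)
    simp only [hx', hn] at *
    linarith
  have hsub : uIcc x₀ x' ⊆ uIcc (0:ℝ) 2 := by
    apply uIcc_subset_uIcc <;> rw [uIcc_of_le (by norm_num : (0:ℝ) ≤ 2)]
    · exact ⟨hx₀.1, by linarith [hx₀.2]⟩
    · exact ⟨by linarith [hx₀.1], by linarith [hx₀.2]⟩
  have hvsub : IntervalIntegrable v volume x₀ x' := hint02.mono_set hsub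
  have key : u x' ^ 2 - u x₀ ^ 2 = ∫ t in x₀..x', 2 * v t := by
    rw [← intervalIntegral.integral_eq_sub_of_hasDerivAt
      (f := fun t => u t ^ 2) (f' := fun t => 2 * v t) ?_ ((hvsub.const_mul 2))]
    intro t _
    have h1 : HasDerivAt (fun t => u t ^ 2) (2 * u t ^ (2-1) * deriv u t) t :=
      HasDerivAt.fun_pow (hu t).hasDerivAt 2 |>.congr_deriv (by push_cast; ring)
    refine h1.congr_deriv ?_
    simp [hv]; ring
  have hvabs01 : IntervalIntegrable (fun t => |v t|) volume 0 1 := hint.abs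
  have hvabs : IntervalIntegrable (fun t => |v t|) volume x₀ (x₀ + 1) := by
    refine (hint02.mono_set ?_).abs
    apply uIcc_subset_uIcc <;> rw [uIcc_of_le (by norm_num : (0:ℝ) ≤ 2)]
    · exact ⟨hx₀.1, by linarith [hx₀.2]⟩
    · constructor <;> linarith [hx₀.1, hx₀.2]
  have habs_per : Function.Periodic (fun t => |v t|) 1 := fun t => by simp [hvper t]
  have step1 : ∫ t in x₀..x', v t ≤ ∫ t in x₀..x', |v t| := by
    apply intervalIntegral.integral_mono_on hb1 hvsub (hvabs.mono_set ?_)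
      (fun t _ => le_abs_self _)
    apply uIcc_subset_uIcc ((by rw [mem_uIcc]; left; exact ⟨le_refl x₀, by linarith⟩))
    rw [mem_uIcc]; left; exact ⟨hb1, hb2⟩
  have step2 : ∫ t in x₀..x', |v t| ≤ ∫ t in x₀..x₀+1, |v t| := by
    apply intervalIntegral.integral_mono_interval (le_refl x₀) hb1 hb2 ?_ hvabs
    filter_upwards with t using abs_nonneg _
  have step3 : ∫ t in x₀..x₀+1, |v t| = ∫ t in (0:ℝ)..1, |v t| := by
    have := habs_per.intervalIntegral_add_eq x₀ 0
    simpa using this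
  have hx2 : u x ^ 2 = ∫ t in x₀..x', 2 * v t := by
    rw [← hux, ← key, hux₀]; ring
  rw [hx2, intervalIntegral.integral_const_mul]
  have : ∫ t in x₀..x', v t ≤ ∫ t in (0:ℝ)..1, |v t| := le_trans step1 (step2.trans step3.le)
  linarith

lemma nnnorm_sq_ennreal (a : ℝ) : (‖a‖₊ : ℝ≥0∞) ^ (2:ℝ) = ENNReal.ofReal (a ^ 2) := by
  rw [show ((2:ℝ)) = ((2:ℕ):ℝ) by norm_num, ENNReal.rpow_natCast]
  rw [show (‖a‖₊ : ℝ≥0∞) = ENNReal.ofReal ‖a‖ from (ofReal_norm a).symm, ← ENNReal.ofReal_pow (norm_nonneg a)]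
  rw [Real.norm_eq_abs, sq_abs]

lemma agmon_line_s9 {w : ℝ → ℝ} (hw : Differentiable ℝ w)
    (hw2 : ∫⁻ t, (‖w t‖₊ : ℝ≥0∞) ^ (2:ℝ) ∂volume ≠ ∞)
    (hI : Integrable (fun t => w t * deriv w t) volume) :
    ∀ y, w y ^ 2 ≤ 2 * ∫ t, |w t * deriv w t| ∂volume := by
  set v : ℝ → ℝ := fun t => w t * deriv w t with hv
  intro y
  have h2 : ∀ z, w z ^ 2 - w y ^ 2 = ∫ t in y..z, 2 * v t := by
    intro z
    rw [← intervalIntegral.integral_eq_sub_of_hasDerivAt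
      (f := fun t => w t ^ 2) (f' := fun t => 2 * v t) ?_ ((hI.intervalIntegrable).const_mul 2)]
    intro t _
    have h1 : HasDerivAt (fun t => w t ^ 2) (2 * w t ^ (2-1) * deriv w t) t :=
      HasDerivAt.fun_pow (hw t).hasDerivAt 2
    refine h1.congr_deriv ?_
    simp [hv]; ring
  have htend : Tendsto (fun z => w z ^ 2) atTop
      (𝓝 (w y ^ 2 + ∫ t in Ioi y, 2 * v t)) := by
    have h3 := intervalIntegral_tendsto_integral_Ioi y
      ((hI.const_mul 2).integrableOn) (tendsto_id (α := ℝ) (x := atTop))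
    have h4 : (fun z => w z ^ 2) = fun z => w y ^ 2 + ∫ t in y..(id z), 2 * v t := by
      funext z; rw [id]; linarith [h2 z]
    rw [h4]
    exact (tendsto_const_nhds.add h3)
  have hL : w y ^ 2 + ∫ t in Ioi y, 2 * v t ≤ 0 := by
    by_contra hL0
    push_neg at hL0
    set L := w y ^ 2 + ∫ t in Ioi y, 2 * v t with hLdef
    have hev : ∀ᶠ z in atTop, L / 2 < w z ^ 2 :=
      htend.eventually (eventually_gt_nhds (by linarith))
    obtain ⟨M, hM⟩ := eventually_atTop.1 hev
    have hbig : ∫⁻ t in Ioi M, (‖w t‖₊ : ℝ≥0∞) ^ (2:ℝ) ∂volume = ∞ := by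
      have hle : ∀ t ∈ Ioi M, ENNReal.ofReal (L/2) ≤ (‖w t‖₊ : ℝ≥0∞) ^ (2:ℝ) := by
        intro t ht
        rw [nnnorm_sq_ennreal]
        exact ENNReal.ofReal_le_ofReal (hM t ht.le).le
      have := setLIntegral_mono' (μ := volume) measurableSet_Ioi hle
      rw [setLIntegral_const] at this
      have hvol : volume (Ioi M) = ∞ := by simp
      rw [hvol, ENNReal.mul_top (by positivity)] at this
      exact top_le_iff.1 this
    exact hw2 (top_le_iff.1 (hbig ▸ setLIntegral_le_lintegral _ _))
  have habs : ∫ t in Ioi y, 2 * v t ≥ - ∫ t, 2 * |v t| ∂volume := by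
    have h5 : ∫ t in Ioi y, 2 * |v t| ∂volume ≤ ∫ t, 2 * |v t| ∂volume :=
      setIntegral_le_integral ((hI.abs).const_mul 2)
        (Filter.Eventually.of_forall (fun t => by positivity))
    have h6 : - ∫ t in Ioi y, 2 * |v t| ∂volume ≤ ∫ t in Ioi y, 2 * v t := by
      have h9 : ∫ t in Ioi y, -(2 * v t) ∂volume ≤ ∫ t in Ioi y, 2 * |v t| ∂volume := by
        apply setIntegral_mono_on ((hI.const_mul 2).integrableOn).neg
          (((hI.abs).const_mul 2).integrableOn) measurableSet_Ioi
        intro t _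
        calc -(2 * v t) ≤ |2 * v t| := neg_le_abs _
        _ = 2 * |v t| := by rw [abs_mul]; norm_num
      rw [integral_neg] at h9
      linarith
    linarith
  have h7 : ∫ t, 2 * |v t| ∂volume = 2 * ∫ t, |v t| ∂volume :=
    integral_const_mul 2 _
  have h8 := h2 y
  simp only [ge_iff_le] at habs
  nlinarith [habs, h7, hL]

lemma cs_lintegral {α : Type*} [MeasurableSpace α] (μ : Measure α) {f g : α → ℝ≥0∞}
    (hf : AEMeasurable f μ) (hg : AEMeasurable g μ) :
    ∫⁻ a, f a * g a ∂μ ≤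
      (∫⁻ a, f a ^ (2:ℝ) ∂μ) ^ (1/2:ℝ) * (∫⁻ a, g a ^ (2:ℝ) ∂μ) ^ (1/2:ℝ) :=
  ENNReal.lintegral_mul_le_Lp_mul_Lq μ (Real.holderConjugate_iff.mpr ⟨one_lt_two, by norm_num⟩) hf hg

lemma l2_to_l1 {u : ℝ → ℝ} (hm : Measurable u)
    (hfin : ∫⁻ t in Ioc (0:ℝ) 1, (‖u t‖₊ : ℝ≥0∞) ^ (2:ℝ) ≠ ∞) :
    IntegrableOn u (Ioc (0:ℝ) 1) volume := by
  refine ⟨hm.aestronglyMeasurable, ?_⟩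
  rw [HasFiniteIntegral]
  have h1 : ∫⁻ t in Ioc (0:ℝ) 1, (‖u t‖₊ : ℝ≥0∞) ∂volume
      = ∫⁻ t in Ioc (0:ℝ) 1, (‖u t‖₊ : ℝ≥0∞) * 1 ∂volume := by simp
  refine lt_of_eq_of_lt h1 ?_
  calc ∫⁻ t in Ioc (0:ℝ) 1, (‖u t‖₊ : ℝ≥0∞) * 1 ∂volume
      ≤ (∫⁻ t in Ioc (0:ℝ) 1, (‖u t‖₊ : ℝ≥0∞) ^ (2:ℝ)) ^ (1/2:ℝ) *
        (∫⁻ t in Ioc (0:ℝ) 1, (1:ℝ≥0∞) ^ (2:ℝ)) ^ (1/2:ℝ) :=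
        cs_lintegral _ hm.nnnorm.coe_nnreal_ennreal.aemeasurable aemeasurable_const
  _ < ∞ := by
      apply ENNReal.mul_lt_top
      · exact ENNReal.rpow_lt_top_of_nonneg (by norm_num) hfin
      · apply ENNReal.rpow_lt_top_of_nonneg (by norm_num)
        simp [Real.volume_Ioc]

lemma agmon_circle_ennreal {u : ℝ → ℝ} (hu : Differentiable ℝ u)
    (hper : Function.Periodic u 1) (hmean : ∫ t in (0:ℝ)..1, u t = 0)
    (hbfin : ∫⁻ t in Ioc (0:ℝ) 1, (‖deriv u t‖₊ : ℝ≥0∞) ^ (2:ℝ) ≠ ∞) :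
    ∀ x, (‖u x‖₊ : ℝ≥0∞) ≤
      (2 * (∫⁻ t in Ioc (0:ℝ) 1, (‖u t‖₊ : ℝ≥0∞) ^ (2:ℝ)) ^ (1/2:ℝ) *
        (∫⁻ t in Ioc (0:ℝ) 1, (‖deriv u t‖₊ : ℝ≥0∞) ^ (2:ℝ)) ^ (1/2:ℝ)) ^ (1/2:ℝ) := by
  have hdm : Measurable (deriv u) := measurable_deriv u
  have hdint : IntegrableOn (deriv u) (Ioc (0:ℝ) 1) volume := l2_to_l1 hdm hbfin
  have hdii : IntervalIntegrable (deriv u) volume 0 1 :=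
    (intervalIntegrable_iff_integrableOn_Ioc_of_le zero_le_one).2 hdint
  have hint : IntervalIntegrable (fun t => u t * deriv u t) volume 0 1 := by
    have := hdii.continuousOn_mul (hu.continuous.continuousOn (s := uIcc (0:ℝ) 1))
    exact this
  have hreal := agmon_circle hu hper hmean hint
  intro x
  have hIv : IntegrableOn (fun t => u t * deriv u t) (Ioc (0:ℝ) 1) volume :=
    (intervalIntegrable_iff_integrableOn_Ioc_of_le zero_le_one).1 hint
  have step1 : (‖u x‖₊ : ℝ≥0∞) ^ (2:ℝ) ≤
      2 * ∫⁻ t in Ioc (0:ℝ) 1, (‖u t * deriv u t‖₊ : ℝ≥0∞) ∂volume := by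
    rw [nnnorm_sq_ennreal]
    calc ENNReal.ofReal (u x ^ 2)
        ≤ ENNReal.ofReal (2 * ∫ t in (0:ℝ)..1, |u t * deriv u t|) :=
          ENNReal.ofReal_le_ofReal (hreal x)
    _ = 2 * ENNReal.ofReal (∫ t in (0:ℝ)..1, |u t * deriv u t|) := by
        rw [ENNReal.ofReal_mul (by norm_num)]
        norm_num
    _ = 2 * ∫⁻ t in Ioc (0:ℝ) 1, (‖u t * deriv u t‖₊ : ℝ≥0∞) ∂volume := by
        congr 1
        rw [intervalIntegral.integral_of_le zero_le_one]
        have : ∀ t, |u t * deriv u t| = ‖u t * deriv u t‖ := fun t => rfl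
        simp_rw [this]
        exact ofReal_integral_norm_eq_lintegral_enorm hIv
  have step2 : ∫⁻ t in Ioc (0:ℝ) 1, (‖u t * deriv u t‖₊ : ℝ≥0∞) ∂volume ≤
      (∫⁻ t in Ioc (0:ℝ) 1, (‖u t‖₊ : ℝ≥0∞) ^ (2:ℝ)) ^ (1/2:ℝ) *
        (∫⁻ t in Ioc (0:ℝ) 1, (‖deriv u t‖₊ : ℝ≥0∞) ^ (2:ℝ)) ^ (1/2:ℝ) := by
    have heq : ∀ t, (‖u t * deriv u t‖₊ : ℝ≥0∞) =
        (‖u t‖₊ : ℝ≥0∞) * (‖deriv u t‖₊ : ℝ≥0∞) := by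
      intro t; rw [nnnorm_mul]; push_cast; ring
    simp_rw [heq]
    exact cs_lintegral _ (hu.continuous.measurable.nnnorm.coe_nnreal_ennreal.aemeasurable)
      (hdm.nnnorm.coe_nnreal_ennreal.aemeasurable)
  have hfinal : (‖u x‖₊ : ℝ≥0∞) ^ (2:ℝ) ≤
      2 * (∫⁻ t in Ioc (0:ℝ) 1, (‖u t‖₊ : ℝ≥0∞) ^ (2:ℝ)) ^ (1/2:ℝ) *
        (∫⁻ t in Ioc (0:ℝ) 1, (‖deriv u t‖₊ : ℝ≥0∞) ^ (2:ℝ)) ^ (1/2:ℝ) := by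
    calc (‖u x‖₊ : ℝ≥0∞) ^ (2:ℝ) ≤ 2 * ∫⁻ t in Ioc (0:ℝ) 1, (‖u t * deriv u t‖₊ : ℝ≥0∞) ∂volume :=
        step1
    _ ≤ 2 * ((∫⁻ t in Ioc (0:ℝ) 1, (‖u t‖₊ : ℝ≥0∞) ^ (2:ℝ)) ^ (1/2:ℝ) *
        (∫⁻ t in Ioc (0:ℝ) 1, (‖deriv u t‖₊ : ℝ≥0∞) ^ (2:ℝ)) ^ (1/2:ℝ)) := by
        exact mul_le_mul_right step2 2
    _ = _ := by ring
  have h9 : ((‖u x‖₊ : ℝ≥0∞) ^ (2:ℝ)) ^ (1/2:ℝ) = (‖u x‖₊ : ℝ≥0∞) := by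
    rw [← ENNReal.rpow_mul]
    norm_num
  rw [← h9]
  exact ENNReal.rpow_le_rpow hfinal (by norm_num)

lemma agmon_line_ennreal {w : ℝ → ℝ} (hw : Differentiable ℝ w)
    (hafin : ∫⁻ t, (‖w t‖₊ : ℝ≥0∞) ^ (2:ℝ) ∂volume ≠ ∞)
    (hbfin : ∫⁻ t, (‖deriv w t‖₊ : ℝ≥0∞) ^ (2:ℝ) ∂volume ≠ ∞) :
    ∀ y, (‖w y‖₊ : ℝ≥0∞) ^ (2:ℝ) ≤
      2 * (∫⁻ t, (‖w t‖₊ : ℝ≥0∞) ^ (2:ℝ) ∂volume) ^ (1/2:ℝ) *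
        (∫⁻ t, (‖deriv w t‖₊ : ℝ≥0∞) ^ (2:ℝ) ∂volume) ^ (1/2:ℝ) := by
  have hdm : Measurable (deriv w) := measurable_deriv w
  have hwm : Measurable w := hw.continuous.measurable
  have heq : ∀ t, (‖w t * deriv w t‖₊ : ℝ≥0∞) =
      (‖w t‖₊ : ℝ≥0∞) * (‖deriv w t‖₊ : ℝ≥0∞) := by
    intro t; rw [nnnorm_mul]; push_cast; ring
  have hcs : ∫⁻ t, (‖w t * deriv w t‖₊ : ℝ≥0∞) ∂volume ≤
      (∫⁻ t, (‖w t‖₊ : ℝ≥0∞) ^ (2:ℝ) ∂volume) ^ (1/2:ℝ) *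
        (∫⁻ t, (‖deriv w t‖₊ : ℝ≥0∞) ^ (2:ℝ) ∂volume) ^ (1/2:ℝ) := by
    simp_rw [heq]
    exact cs_lintegral _ (hwm.nnnorm.coe_nnreal_ennreal.aemeasurable)
      (hdm.nnnorm.coe_nnreal_ennreal.aemeasurable)
  have hI : Integrable (fun t => w t * deriv w t) volume := by
    refine ⟨(hwm.mul hdm).aestronglyMeasurable, ?_⟩
    rw [HasFiniteIntegral]
    calc ∫⁻ t, (‖w t * deriv w t‖₊ : ℝ≥0∞) ∂volume ≤ _ := hcs
    _ < ∞ := ENNReal.mul_lt_top (ENNReal.rpow_lt_top_of_nonneg (by norm_num) hafin)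
        (ENNReal.rpow_lt_top_of_nonneg (by norm_num) hbfin)
  have hreal := agmon_line_s9 hw hafin hI
  intro y
  calc (‖w y‖₊ : ℝ≥0∞) ^ (2:ℝ) = ENNReal.ofReal (w y ^ 2) := nnnorm_sq_ennreal _
  _ ≤ ENNReal.ofReal (2 * ∫ t, |w t * deriv w t| ∂volume) :=
      ENNReal.ofReal_le_ofReal (hreal y)
  _ = 2 * ENNReal.ofReal (∫ t, |w t * deriv w t| ∂volume) := by
      rw [ENNReal.ofReal_mul (by norm_num)]; norm_num
  _ = 2 * ∫⁻ t, (‖w t * deriv w t‖₊ : ℝ≥0∞) ∂volume := by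
      congr 1
      have : ∀ t, |w t * deriv w t| = ‖w t * deriv w t‖ := fun t => rfl
      simp_rw [this]
      exact ofReal_integral_norm_eq_lintegral_enorm hI
  _ ≤ 2 * ((∫⁻ t, (‖w t‖₊ : ℝ≥0∞) ^ (2:ℝ) ∂volume) ^ (1/2:ℝ) *
      (∫⁻ t, (‖deriv w t‖₊ : ℝ≥0∞) ^ (2:ℝ) ∂volume) ^ (1/2:ℝ)) := mul_le_mul_right hcs 2
  _ = _ := by ring

lemma eLpNorm_two_eq {α : Type*} [MeasurableSpace α] (μ : Measure α) (f : α → ℝ) :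
    eLpNorm f 2 μ = (∫⁻ a, (‖f a‖₊ : ℝ≥0∞) ^ (2:ℝ) ∂μ) ^ (1/2:ℝ) := by
  rw [eLpNorm_eq_lintegral_rpow_enorm_toReal (by norm_num) (by norm_num)]
  norm_num
  rfl

lemma rpow_two_mul (x : ℝ≥0∞) : x ^ (2:ℝ) = x * x := by
  rw [show ((2:ℝ)) = ((2:ℕ):ℝ) by norm_num, ENNReal.rpow_natCast]
  exact sq x

lemma rpow_half_sq (x : ℝ≥0∞) : (x ^ (1/2:ℝ)) ^ (2:ℝ) = x := by
  rw [← ENNReal.rpow_mul]; norm_num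

/-- Anisotropic bound on the triple product with the oscillation part `f̃`:
`|∫ f̃ g h| ≤ C ‖f̃‖^{1/2} ‖∂₁f̃‖^{1/2} ‖g‖^{1/2} ‖∂₂g‖^{1/2} ‖h‖`. -/
theorem stmt9 : ∃ C : ℝ, 0 < C ∧ ∀ f g h : ℝ × ℝ → ℝ,
    Per f → Per g → Per h → Differentiable ℝ f → Differentiable ℝ g →
    MemLp (osc f) 2 μΩ → MemLp (pd1 (osc f)) 2 μΩ →
    MemLp g 2 μΩ → MemLp (pd2 g) 2 μΩ → MemLp h 2 μΩ →
    |∫ p, osc f p * g p * h p ∂μΩ| ≤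
      C * (eLpNorm (osc f) 2 μΩ).toReal ^ (1/2 : ℝ) *
        (eLpNorm (pd1 (osc f)) 2 μΩ).toReal ^ (1/2 : ℝ) *
        (eLpNorm g 2 μΩ).toReal ^ (1/2 : ℝ) * (eLpNorm (pd2 g) 2 μΩ).toReal ^ (1/2 : ℝ) *
        (eLpNorm h 2 μΩ).toReal := by
  refine ⟨2, two_pos, fun f g h hPf hPg hPh hdf hdg hmF hmF1 hmg hmD hmh => ?_⟩
  have hcf : Continuous f := hdf.continuous
  have hcg : Continuous g := hdg.continuous
  -- continuity of the horizontal average and of `osc f`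
  have hhavg : Continuous (havg f) := by
    have : Continuous (Function.uncurry fun (y : ℝ) (t : ℝ) => f (t, y)) :=
      hcf.comp continuous_swap
    exact intervalIntegral.continuous_parametric_intervalIntegral_of_continuous' this 0 1
  have hoscC : Continuous (osc f) := hcf.sub (hhavg.comp continuous_snd)
  -- measurability of the partial derivatives
  have hF1meas : Measurable (pd1 (osc f)) := by
    have hk : Continuous (Function.uncurry fun (y : ℝ) (x : ℝ) => osc f (x, y)) :=
      hoscC.comp continuous_swap
    have := (measurable_deriv_with_param hk).comp (measurable_swap (α := ℝ) (β := ℝ))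
    exact this
  have hDmeas : Measurable (pd2 g) := by
    have hk : Continuous (Function.uncurry fun (x : ℝ) (y : ℝ) => g (x, y)) := by
      have : (Function.uncurry fun (x : ℝ) (y : ℝ) => g (x, y)) = g := by
        funext p; rfl
      rw [this]; exact hcg
    exact measurable_deriv_with_param hk
  -- measurable representative of h
  obtain ⟨h', h'sm, hh'⟩ := hmh.aestronglyMeasurable
  have h'meas : Measurable h' := h'sm.measurable
  set ν := (volume : Measure ℝ).restrict (Ioc (0:ℝ) 1) with hν
  -- squared-norm integrands and their measurability
  have hFn : Measurable fun p : ℝ × ℝ => (‖osc f p‖₊ : ℝ≥0∞) :=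
    hoscC.measurable.nnnorm.coe_nnreal_ennreal
  have hF1n : Measurable fun p : ℝ × ℝ => (‖pd1 (osc f) p‖₊ : ℝ≥0∞) :=
    hF1meas.nnnorm.coe_nnreal_ennreal
  have hGn : Measurable fun p : ℝ × ℝ => (‖g p‖₊ : ℝ≥0∞) :=
    hcg.measurable.nnnorm.coe_nnreal_ennreal
  have hDn : Measurable fun p : ℝ × ℝ => (‖pd2 g p‖₊ : ℝ≥0∞) :=
    hDmeas.nnnorm.coe_nnreal_ennreal
  have hHn : Measurable fun p : ℝ × ℝ => (‖h' p‖₊ : ℝ≥0∞) :=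
    h'meas.nnnorm.coe_nnreal_ennreal
  have sqm : ∀ {k : ℝ × ℝ → ℝ≥0∞}, Measurable k →
      Measurable fun p => k p ^ (2:ℝ) := by
    intro k hk
    simp_rw [rpow_two_mul]
    exact hk.mul hk
  set A := ∫⁻ p, (‖osc f p‖₊ : ℝ≥0∞) ^ (2:ℝ) ∂μΩ with hAdef
  set B := ∫⁻ p, (‖pd1 (osc f) p‖₊ : ℝ≥0∞) ^ (2:ℝ) ∂μΩ with hBdef
  set G2 := ∫⁻ p, (‖g p‖₊ : ℝ≥0∞) ^ (2:ℝ) ∂μΩ with hG2def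
  set D2 := ∫⁻ p, (‖pd2 g p‖₊ : ℝ≥0∞) ^ (2:ℝ) ∂μΩ with hD2def
  set H2 := ∫⁻ p, (‖h' p‖₊ : ℝ≥0∞) ^ (2:ℝ) ∂μΩ with hH2def
  -- finiteness from MemLp
  have fin_of_memLp : ∀ {k : ℝ × ℝ → ℝ} , MemLp k 2 μΩ →
      (∫⁻ p, (‖k p‖₊ : ℝ≥0∞) ^ (2:ℝ) ∂μΩ) ≠ ∞ := by
    intro k hk
    have h2 := hk.2
    rw [eLpNorm_two_eq] at h2
    intro hcon
    rw [hcon, ENNReal.top_rpow_of_pos (by norm_num)] at h2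
    exact lt_irrefl _ h2
  have hAne : A ≠ ∞ := fin_of_memLp hmF
  have hBne : B ≠ ∞ := fin_of_memLp hmF1
  have hG2ne : G2 ≠ ∞ := fin_of_memLp hmg
  have hD2ne : D2 ≠ ∞ := fin_of_memLp hmD
  have hH2ne : H2 ≠ ∞ := fin_of_memLp ((memLp_congr_ae hh').1 hmh)
  -- slice integrals
  set a : ℝ → ℝ≥0∞ := fun y => ∫⁻ x, (‖osc f (x, y)‖₊ : ℝ≥0∞) ^ (2:ℝ) ∂ν with hadef
  set b : ℝ → ℝ≥0∞ := fun y => ∫⁻ x, (‖pd1 (osc f) (x, y)‖₊ : ℝ≥0∞) ^ (2:ℝ) ∂ν with hbdef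
  set Hx : ℝ → ℝ≥0∞ := fun y => ∫⁻ x, (‖h' (x, y)‖₊ : ℝ≥0∞) ^ (2:ℝ) ∂ν with hHxdef
  set c : ℝ → ℝ≥0∞ := fun x => ∫⁻ y, (‖g (x, y)‖₊ : ℝ≥0∞) ^ (2:ℝ) ∂volume with hcdef
  set d : ℝ → ℝ≥0∞ := fun x => ∫⁻ y, (‖pd2 g (x, y)‖₊ : ℝ≥0∞) ^ (2:ℝ) ∂volume with hddef
  have ham : Measurable a := Measurable.lintegral_prod_left (sqm hFn)
  have hbm : Measurable b := Measurable.lintegral_prod_left (sqm hF1n)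
  have hHxm : Measurable Hx := Measurable.lintegral_prod_left (sqm hHn)
  have hcm : Measurable c := Measurable.lintegral_prod_right' (sqm hGn)
  have hdm : Measurable d := Measurable.lintegral_prod_right' (sqm hDn)
  -- Fubini identities
  have hAeq : ∫⁻ y, a y ∂volume = A :=
    (MeasureTheory.lintegral_prod_symm _ (sqm hFn).aemeasurable).symm
  have hBeq : ∫⁻ y, b y ∂volume = B :=
    (MeasureTheory.lintegral_prod_symm _ (sqm hF1n).aemeasurable).symm
  have hHxeq : ∫⁻ y, Hx y ∂volume = H2 :=
    (MeasureTheory.lintegral_prod_symm _ (sqm hHn).aemeasurable).symm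
  have hceq : ∫⁻ x, c x ∂ν = G2 :=
    (MeasureTheory.lintegral_prod _ (sqm hGn).aemeasurable).symm
  have hdeq : ∫⁻ x, d x ∂ν = D2 :=
    (MeasureTheory.lintegral_prod _ (sqm hDn).aemeasurable).symm
  -- vertical (Agmon on the line) bound for `g`
  have hcd : ∀ᵐ x ∂ν, c x ≠ ∞ ∧ d x ≠ ∞ := by
    have h1 : ∀ᵐ x ∂ν, c x < ∞ := ae_lt_top hcm (by rw [hceq]; exact hG2ne)
    have h2 : ∀ᵐ x ∂ν, d x < ∞ := ae_lt_top hdm (by rw [hdeq]; exact hD2ne)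
    filter_upwards [h1, h2] with x hx1 hx2
    exact ⟨hx1.ne, hx2.ne⟩
  have hgb : ∀ᵐ x ∂ν, ∀ y, (‖g (x, y)‖₊ : ℝ≥0∞) ^ (2:ℝ) ≤
      2 * (c x) ^ (1/2:ℝ) * (d x) ^ (1/2:ℝ) := by
    filter_upwards [hcd] with x hx
    have hw : Differentiable ℝ (fun y => g (x, y)) :=
      hdg.comp ((differentiable_const x).prodMk differentiable_id)
    exact agmon_line_ennreal hw hx.1 hx.2
  have hGy : ∀ y, (∫⁻ x, (‖g (x, y)‖₊ : ℝ≥0∞) ^ (2:ℝ) ∂ν) ≤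
      2 * G2 ^ (1/2:ℝ) * D2 ^ (1/2:ℝ) := by
    intro y
    have hm1 : Measurable fun x => (c x) ^ (1/2:ℝ) :=
      (ENNReal.continuous_rpow_const.measurable).comp hcm
    have hm2 : Measurable fun x => (d x) ^ (1/2:ℝ) :=
      (ENNReal.continuous_rpow_const.measurable).comp hdm
    calc ∫⁻ x, (‖g (x, y)‖₊ : ℝ≥0∞) ^ (2:ℝ) ∂ν
        ≤ ∫⁻ x, 2 * ((c x) ^ (1/2:ℝ) * (d x) ^ (1/2:ℝ)) ∂ν := by
          apply lintegral_mono_ae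
          filter_upwards [hgb] with x hx
          calc (‖g (x, y)‖₊ : ℝ≥0∞) ^ (2:ℝ) ≤ 2 * (c x) ^ (1/2:ℝ) * (d x) ^ (1/2:ℝ) := hx y
          _ = 2 * ((c x) ^ (1/2:ℝ) * (d x) ^ (1/2:ℝ)) := by ring
    _ = 2 * ∫⁻ x, (c x) ^ (1/2:ℝ) * (d x) ^ (1/2:ℝ) ∂ν :=
          lintegral_const_mul' 2 _ (by norm_num)
    _ ≤ 2 * ((∫⁻ x, ((c x) ^ (1/2:ℝ)) ^ (2:ℝ) ∂ν) ^ (1/2:ℝ) *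
          (∫⁻ x, ((d x) ^ (1/2:ℝ)) ^ (2:ℝ) ∂ν) ^ (1/2:ℝ)) :=
          mul_le_mul_right (cs_lintegral ν hm1.aemeasurable hm2.aemeasurable) 2
    _ = 2 * G2 ^ (1/2:ℝ) * D2 ^ (1/2:ℝ) := by
          simp_rw [rpow_half_sq]
          rw [hceq, hdeq]; ring
  -- horizontal (Agmon on the circle) bound for `osc f`
  have hab : ∀ᵐ y ∂(volume : Measure ℝ), a y ≠ ∞ ∧ b y ≠ ∞ := by
    have h1 : ∀ᵐ y ∂(volume : Measure ℝ), a y < ∞ := ae_lt_top ham (by rw [hAeq]; exact hAne)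
    have h2 : ∀ᵐ y ∂(volume : Measure ℝ), b y < ∞ := ae_lt_top hbm (by rw [hBeq]; exact hBne)
    filter_upwards [h1, h2] with y hy1 hy2
    exact ⟨hy1.ne, hy2.ne⟩
  have hsup : ∀ᵐ y ∂(volume : Measure ℝ), ∀ x, (‖osc f (x, y)‖₊ : ℝ≥0∞) ≤
      (2 * (a y) ^ (1/2:ℝ) * (b y) ^ (1/2:ℝ)) ^ (1/2:ℝ) := by
    filter_upwards [hab] with y hy
    have hu : Differentiable ℝ (fun x => osc f (x, y)) := by
      have h1 : Differentiable ℝ (fun x => f (x, y)) :=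
        hdf.comp (differentiable_id.prodMk (differentiable_const y))
      have : (fun x => osc f (x, y)) = fun x => f (x, y) - havg f y := rfl
      rw [this]
      exact h1.sub_const _
    have hper : Function.Periodic (fun x => osc f (x, y)) 1 := by
      intro x
      simp only [osc]
      rw [hPf x y]
    have hmean : ∫ t in (0:ℝ)..1, osc f (t, y) = 0 := by
      have hfi : IntervalIntegrable (fun t => f (t, y)) volume 0 1 :=
        (hcf.comp (continuous_id.prodMk continuous_const)).intervalIntegrable 0 1
      have hosceq : (fun t => osc f (t, y)) = fun t => f (t, y) - havg f y := rfl
      rw [show (∫ t in (0:ℝ)..1, osc f (t, y)) = ∫ t in (0:ℝ)..1, (f (t, y) - havg f y) from by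
        rw [hosceq]]
      rw [intervalIntegral.integral_sub hfi intervalIntegrable_const,
        intervalIntegral.integral_const]
      simp [havg]
    exact agmon_circle_ennreal hu hper hmean hy.2
  -- main chain
  have hfin : ∀ {X : ℝ≥0∞}, X ≠ ∞ → X ^ (1/2:ℝ) ≠ ∞ := fun hX => by
    rw [Ne, ENNReal.rpow_eq_top_iff_of_pos (by norm_num)]; exact hX
  have hTmeas : Measurable fun p : ℝ × ℝ => (‖osc f p * g p * h' p‖₊ : ℝ≥0∞) :=
    ((hoscC.measurable.mul hcg.measurable).mul h'meas).nnnorm.coe_nnreal_ennreal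
  set T := ∫⁻ p, (‖osc f p * g p * h' p‖₊ : ℝ≥0∞) ∂μΩ with hTdef
  have hTf : T = ∫⁻ y, ∫⁻ x, (‖osc f (x, y) * g (x, y) * h' (x, y)‖₊ : ℝ≥0∞) ∂ν ∂volume :=
    MeasureTheory.lintegral_prod_symm _ hTmeas.aemeasurable
  set K := (2 * G2 ^ (1/2:ℝ) * D2 ^ (1/2:ℝ)) ^ (1/2:ℝ) with hKdef
  have hKne : K ≠ ∞ := by
    rw [hKdef, Ne, ENNReal.rpow_eq_top_iff_of_pos (by norm_num)]
    exact ENNReal.mul_ne_top (ENNReal.mul_ne_top (by norm_num) (hfin hG2ne)) (hfin hD2ne)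
  have hinner : ∀ᵐ y ∂(volume : Measure ℝ),
      (∫⁻ x, (‖osc f (x, y) * g (x, y) * h' (x, y)‖₊ : ℝ≥0∞) ∂ν) ≤
        (2 * (a y) ^ (1/2:ℝ) * (b y) ^ (1/2:ℝ)) ^ (1/2:ℝ) * (K * (Hx y) ^ (1/2:ℝ)) := by
    filter_upwards [hsup, hab] with y hs hy
    have hsne : (2 * (a y) ^ (1/2:ℝ) * (b y) ^ (1/2:ℝ)) ^ (1/2:ℝ) ≠ ∞ := by
      rw [Ne, ENNReal.rpow_eq_top_iff_of_pos (by norm_num)]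
      exact ENNReal.mul_ne_top (ENNReal.mul_ne_top (by norm_num) (hfin hy.1)) (hfin hy.2)
    have hgsl : Measurable fun x => (‖g (x, y)‖₊ : ℝ≥0∞) :=
      ((hcg.comp (continuous_id.prodMk continuous_const)).measurable).nnnorm.coe_nnreal_ennreal
    have hhsl : Measurable fun x => (‖h' (x, y)‖₊ : ℝ≥0∞) :=
      (h'meas.comp (measurable_id.prodMk measurable_const)).nnnorm.coe_nnreal_ennreal
    calc ∫⁻ x, (‖osc f (x, y) * g (x, y) * h' (x, y)‖₊ : ℝ≥0∞) ∂ν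
        = ∫⁻ x, (‖osc f (x, y)‖₊ : ℝ≥0∞) *
            ((‖g (x, y)‖₊ : ℝ≥0∞) * (‖h' (x, y)‖₊ : ℝ≥0∞)) ∂ν := by
          simp_rw [nnnorm_mul, ENNReal.coe_mul, mul_assoc]
    _ ≤ ∫⁻ x, (2 * (a y) ^ (1/2:ℝ) * (b y) ^ (1/2:ℝ)) ^ (1/2:ℝ) *
          ((‖g (x, y)‖₊ : ℝ≥0∞) * (‖h' (x, y)‖₊ : ℝ≥0∞)) ∂ν :=
          lintegral_mono fun x => mul_le_mul_left (hs x) _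
    _ = (2 * (a y) ^ (1/2:ℝ) * (b y) ^ (1/2:ℝ)) ^ (1/2:ℝ) *
          ∫⁻ x, (‖g (x, y)‖₊ : ℝ≥0∞) * (‖h' (x, y)‖₊ : ℝ≥0∞) ∂ν :=
          lintegral_const_mul' _ _ hsne
    _ ≤ (2 * (a y) ^ (1/2:ℝ) * (b y) ^ (1/2:ℝ)) ^ (1/2:ℝ) *
          ((∫⁻ x, (‖g (x, y)‖₊ : ℝ≥0∞) ^ (2:ℝ) ∂ν) ^ (1/2:ℝ) * (Hx y) ^ (1/2:ℝ)) :=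
          mul_le_mul_right (cs_lintegral ν hgsl.aemeasurable hhsl.aemeasurable) _
    _ ≤ (2 * (a y) ^ (1/2:ℝ) * (b y) ^ (1/2:ℝ)) ^ (1/2:ℝ) * (K * (Hx y) ^ (1/2:ℝ)) := by
          apply mul_le_mul_right
          apply mul_le_mul_left
          exact ENNReal.rpow_le_rpow (hGy y) (by norm_num)
  have hs_expand : ∀ y, (2 * (a y) ^ (1/2:ℝ) * (b y) ^ (1/2:ℝ)) ^ (1/2:ℝ)
      = (2:ℝ≥0∞) ^ (1/2:ℝ) * (((a y) ^ (1/2:ℝ)) ^ (1/2:ℝ) * ((b y) ^ (1/2:ℝ)) ^ (1/2:ℝ)) := by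
    intro y
    rw [ENNReal.mul_rpow_of_nonneg _ _ (by norm_num : (0:ℝ) ≤ 1/2),
      ENNReal.mul_rpow_of_nonneg _ _ (by norm_num : (0:ℝ) ≤ 1/2)]
    ring
  have hrp : ∀ {k : ℝ → ℝ≥0∞}, Measurable k → Measurable fun y => (k y) ^ (1/2:ℝ) :=
    fun hk => (ENNReal.continuous_rpow_const.measurable).comp hk
  have hphi : Measurable fun y => ((a y) ^ (1/2:ℝ)) ^ (1/2:ℝ) * ((b y) ^ (1/2:ℝ)) ^ (1/2:ℝ) :=
    (hrp (hrp ham)).mul (hrp (hrp hbm))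
  have hpsi : Measurable fun y => (Hx y) ^ (1/2:ℝ) := hrp hHxm
  have hJ : ∫⁻ y, (2 * (a y) ^ (1/2:ℝ) * (b y) ^ (1/2:ℝ)) ^ (1/2:ℝ) * (Hx y) ^ (1/2:ℝ) ∂volume
      ≤ (2:ℝ≥0∞) ^ (1/2:ℝ) * ((A ^ (1/2:ℝ) * B ^ (1/2:ℝ)) ^ (1/2:ℝ) * H2 ^ (1/2:ℝ)) := by
    calc ∫⁻ y, (2 * (a y) ^ (1/2:ℝ) * (b y) ^ (1/2:ℝ)) ^ (1/2:ℝ) * (Hx y) ^ (1/2:ℝ) ∂volume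
        = ∫⁻ y, (2:ℝ≥0∞) ^ (1/2:ℝ) *
            ((((a y) ^ (1/2:ℝ)) ^ (1/2:ℝ) * ((b y) ^ (1/2:ℝ)) ^ (1/2:ℝ)) * (Hx y) ^ (1/2:ℝ))
            ∂volume := by
          apply lintegral_congr
          intro y
          rw [hs_expand y]
          ring
    _ = (2:ℝ≥0∞) ^ (1/2:ℝ) * ∫⁻ y,
          (((a y) ^ (1/2:ℝ)) ^ (1/2:ℝ) * ((b y) ^ (1/2:ℝ)) ^ (1/2:ℝ)) * (Hx y) ^ (1/2:ℝ)
          ∂volume := lintegral_const_mul' _ _ (hfin (by norm_num))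
    _ ≤ (2:ℝ≥0∞) ^ (1/2:ℝ) *
          ((∫⁻ y, ((((a y) ^ (1/2:ℝ)) ^ (1/2:ℝ) * ((b y) ^ (1/2:ℝ)) ^ (1/2:ℝ))) ^ (2:ℝ) ∂volume)
              ^ (1/2:ℝ) *
            (∫⁻ y, ((Hx y) ^ (1/2:ℝ)) ^ (2:ℝ) ∂volume) ^ (1/2:ℝ)) :=
          mul_le_mul_right (cs_lintegral _ hphi.aemeasurable hpsi.aemeasurable) _
    _ = (2:ℝ≥0∞) ^ (1/2:ℝ) *
          ((∫⁻ y, (a y) ^ (1/2:ℝ) * (b y) ^ (1/2:ℝ) ∂volume) ^ (1/2:ℝ) * H2 ^ (1/2:ℝ)) := by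
          congr 2
          · congr 1
            apply lintegral_congr
            intro y
            rw [ENNReal.mul_rpow_of_nonneg _ _ (by norm_num : (0:ℝ) ≤ 2),
              rpow_half_sq, rpow_half_sq]
          · rw [show (∫⁻ y, ((Hx y) ^ (1/2:ℝ)) ^ (2:ℝ) ∂volume) = ∫⁻ y, Hx y ∂volume from
              lintegral_congr fun y => rpow_half_sq _]
            rw [hHxeq]
    _ ≤ (2:ℝ≥0∞) ^ (1/2:ℝ) * ((A ^ (1/2:ℝ) * B ^ (1/2:ℝ)) ^ (1/2:ℝ) * H2 ^ (1/2:ℝ)) := by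
          apply mul_le_mul_right
          apply mul_le_mul_left
          apply ENNReal.rpow_le_rpow _ (by norm_num : (0:ℝ) ≤ 1/2)
          have hcs2 := cs_lintegral (volume : Measure ℝ)
            (f := fun y => (a y) ^ (1/2:ℝ)) (g := fun y => (b y) ^ (1/2:ℝ))
            (hrp ham).aemeasurable (hrp hbm).aemeasurable
          calc ∫⁻ y, (a y) ^ (1/2:ℝ) * (b y) ^ (1/2:ℝ) ∂volume
              ≤ (∫⁻ y, ((a y) ^ (1/2:ℝ)) ^ (2:ℝ) ∂volume) ^ (1/2:ℝ) *
                (∫⁻ y, ((b y) ^ (1/2:ℝ)) ^ (2:ℝ) ∂volume) ^ (1/2:ℝ) := hcs2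
          _ = A ^ (1/2:ℝ) * B ^ (1/2:ℝ) := by
              rw [show (∫⁻ y, ((a y) ^ (1/2:ℝ)) ^ (2:ℝ) ∂volume) = ∫⁻ y, a y ∂volume from
                lintegral_congr fun y => rpow_half_sq _]
              rw [show (∫⁻ y, ((b y) ^ (1/2:ℝ)) ^ (2:ℝ) ∂volume) = ∫⁻ y, b y ∂volume from
                lintegral_congr fun y => rpow_half_sq _]
              rw [hAeq, hBeq]
  have houter : T ≤ K * ((2:ℝ≥0∞) ^ (1/2:ℝ) *
      ((A ^ (1/2:ℝ) * B ^ (1/2:ℝ)) ^ (1/2:ℝ) * H2 ^ (1/2:ℝ))) := by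
    rw [hTf]
    calc ∫⁻ y, ∫⁻ x, (‖osc f (x, y) * g (x, y) * h' (x, y)‖₊ : ℝ≥0∞) ∂ν ∂volume
        ≤ ∫⁻ y, (2 * (a y) ^ (1/2:ℝ) * (b y) ^ (1/2:ℝ)) ^ (1/2:ℝ) * (K * (Hx y) ^ (1/2:ℝ))
            ∂volume := lintegral_mono_ae hinner
    _ = K * ∫⁻ y, (2 * (a y) ^ (1/2:ℝ) * (b y) ^ (1/2:ℝ)) ^ (1/2:ℝ) * (Hx y) ^ (1/2:ℝ)
            ∂volume := by
          rw [← lintegral_const_mul' K _ hKne]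
          apply lintegral_congr
          intro y
          ring
    _ ≤ K * ((2:ℝ≥0∞) ^ (1/2:ℝ) * ((A ^ (1/2:ℝ) * B ^ (1/2:ℝ)) ^ (1/2:ℝ) * H2 ^ (1/2:ℝ))) :=
          mul_le_mul_right hJ _
  have h22 : (2:ℝ≥0∞) ^ (1/2:ℝ) * (2:ℝ≥0∞) ^ (1/2:ℝ) = 2 := by
    rw [← ENNReal.rpow_add _ _ (by norm_num) (by norm_num)]
    norm_num
  have hval : K * ((2:ℝ≥0∞) ^ (1/2:ℝ) * ((A ^ (1/2:ℝ) * B ^ (1/2:ℝ)) ^ (1/2:ℝ) * H2 ^ (1/2:ℝ)))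
      = 2 * ((A ^ (1/2:ℝ)) ^ (1/2:ℝ) * ((B ^ (1/2:ℝ)) ^ (1/2:ℝ) *
          ((G2 ^ (1/2:ℝ)) ^ (1/2:ℝ) * ((D2 ^ (1/2:ℝ)) ^ (1/2:ℝ) * H2 ^ (1/2:ℝ))))) := by
    rw [hKdef, ENNReal.mul_rpow_of_nonneg _ _ (by norm_num : (0:ℝ) ≤ 1/2),
      ENNReal.mul_rpow_of_nonneg _ _ (by norm_num : (0:ℝ) ≤ 1/2),
      ENNReal.mul_rpow_of_nonneg (A ^ (1/2:ℝ)) _ (by norm_num : (0:ℝ) ≤ 1/2)]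
    calc ((2:ℝ≥0∞) ^ (1/2:ℝ) * (G2 ^ (1/2:ℝ)) ^ (1/2:ℝ) * (D2 ^ (1/2:ℝ)) ^ (1/2:ℝ)) *
          ((2:ℝ≥0∞) ^ (1/2:ℝ) *
            ((A ^ (1/2:ℝ)) ^ (1/2:ℝ) * (B ^ (1/2:ℝ)) ^ (1/2:ℝ) * H2 ^ (1/2:ℝ)))
        = ((2:ℝ≥0∞) ^ (1/2:ℝ) * (2:ℝ≥0∞) ^ (1/2:ℝ)) *
            ((A ^ (1/2:ℝ)) ^ (1/2:ℝ) * ((B ^ (1/2:ℝ)) ^ (1/2:ℝ) *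
              ((G2 ^ (1/2:ℝ)) ^ (1/2:ℝ) * ((D2 ^ (1/2:ℝ)) ^ (1/2:ℝ) * H2 ^ (1/2:ℝ))))) := by
          ring
    _ = _ := by rw [h22]
  have hRne : 2 * ((A ^ (1/2:ℝ)) ^ (1/2:ℝ) * ((B ^ (1/2:ℝ)) ^ (1/2:ℝ) *
      ((G2 ^ (1/2:ℝ)) ^ (1/2:ℝ) * ((D2 ^ (1/2:ℝ)) ^ (1/2:ℝ) * H2 ^ (1/2:ℝ))))) ≠ ∞ := by
    refine ENNReal.mul_ne_top (by norm_num) (ENNReal.mul_ne_top (hfin (hfin hAne))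
      (ENNReal.mul_ne_top (hfin (hfin hBne)) (ENNReal.mul_ne_top (hfin (hfin hG2ne))
        (ENNReal.mul_ne_top (hfin (hfin hD2ne)) (hfin hH2ne)))))
  have hleft : |∫ p, osc f p * g p * h p ∂μΩ| ≤ T.toReal := by
    rw [show (∫ p, osc f p * g p * h p ∂μΩ) = ∫ p, osc f p * g p * h' p ∂μΩ from
      integral_congr_ae (by filter_upwards [hh'] with p hp; rw [hp])]
    calc |∫ p, osc f p * g p * h' p ∂μΩ| = ‖∫ p, osc f p * g p * h' p ∂μΩ‖ :=
        (Real.norm_eq_abs _).symm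
    _ ≤ (∫⁻ p, ENNReal.ofReal ‖osc f p * g p * h' p‖ ∂μΩ).toReal :=
        norm_integral_le_lintegral_norm _
    _ = T.toReal := by
        rw [hTdef]
        congr 1
        apply lintegral_congr
        intro p
        exact ofReal_norm _
  have hmain : |∫ p, osc f p * g p * h p ∂μΩ| ≤
      (2 * ((A ^ (1/2:ℝ)) ^ (1/2:ℝ) * ((B ^ (1/2:ℝ)) ^ (1/2:ℝ) *
        ((G2 ^ (1/2:ℝ)) ^ (1/2:ℝ) * ((D2 ^ (1/2:ℝ)) ^ (1/2:ℝ) * H2 ^ (1/2:ℝ)))))).toReal :=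
    le_trans hleft (ENNReal.toReal_mono hRne (le_trans houter (le_of_eq hval)))
  calc |∫ p, osc f p * g p * h p ∂μΩ| ≤ _ := hmain
  _ = 2 * (eLpNorm (osc f) 2 μΩ).toReal ^ (1/2 : ℝ) *
        (eLpNorm (pd1 (osc f)) 2 μΩ).toReal ^ (1/2 : ℝ) *
        (eLpNorm g 2 μΩ).toReal ^ (1/2 : ℝ) * (eLpNorm (pd2 g) 2 μΩ).toReal ^ (1/2 : ℝ) *
        (eLpNorm h 2 μΩ).toReal := by
      rw [eLpNorm_congr_ae hh', eLpNorm_two_eq μΩ (osc f), eLpNorm_two_eq μΩ (pd1 (osc f)),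
        eLpNorm_two_eq μΩ g, eLpNorm_two_eq μΩ (pd2 g), eLpNorm_two_eq μΩ h']
      simp only [ENNReal.toReal_mul, ENNReal.toReal_ofNat, ← ENNReal.toReal_rpow]
      ring
end

section
/- There is a constant C > 0 such that for any f ∈ H²(𝕋 × ℝ) with zero horizontal average (f̄ = 0), one has ‖f‖_{L^∞(Ω)} ≤ C ‖f‖_{L²}^{1/4} ‖∂₁f‖_{L²}^{1/4} ‖∂₂f‖_{L²}^{1/4} ‖∂₁∂₂f‖_{L²}^{1/4}. -/
open MeasureTheory Real

lemma abs_rpow_two_eq (u : ℝ) : |u| ^ (2:ℝ) = u ^ 2 := by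
  rw [show (2:ℝ) = ((2:ℕ):ℝ) by norm_num, Real.rpow_natCast, sq_abs]

lemma l2norm_eq {α : Type*} [MeasurableSpace α] {μ : Measure α} {u : α → ℝ}
    (hu : MemLp u 2 μ) :
    (eLpNorm u 2 μ).toReal = (∫ a, u a ^ 2 ∂μ) ^ (1/2 : ℝ) := by
  rw [hu.eLpNorm_eq_integral_rpow_norm (by norm_num) (by norm_num)]
  rw [ENNReal.toReal_ofReal (by positivity)]
  have h2 : (2:ENNReal).toReal = (2:ℝ) := by norm_num
  have : ∀ a : α, ‖u a‖ ^ ((2:ENNReal).toReal) = u a ^ 2 := fun a => by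
    rw [h2, Real.norm_eq_abs, abs_rpow_two_eq]
  simp only [this, h2]
  norm_num

lemma CS2 {α : Type*} [MeasurableSpace α] {μ : Measure α} {u v : α → ℝ}
    (hu : MemLp u 2 μ) (hv : MemLp v 2 μ) :
    ∫ a, |u a| * |v a| ∂μ ≤ (eLpNorm u 2 μ).toReal * (eLpNorm v 2 μ).toReal := by
  have h := integral_mul_norm_le_Lp_mul_Lq (μ := μ) (f := u) (g := v)
    (p := 2) (q := 2) (by constructor <;> norm_num) (by simpa using hu) (by simpa using hv)
  simp only [Real.norm_eq_abs, abs_rpow_two_eq] at h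
  calc ∫ a, |u a| * |v a| ∂μ ≤ (∫ a, u a ^ 2 ∂μ) ^ (1/2:ℝ) * (∫ a, v a ^ 2 ∂μ) ^ (1/2:ℝ) := h
    _ = (eLpNorm u 2 μ).toReal * (eLpNorm v 2 μ).toReal := by rw [l2norm_eq hu, l2norm_eq hv]

section Calc

lemma slice1 {f : ℝ × ℝ → ℝ} (hf : Differentiable ℝ f) (x y : ℝ) :
    HasDerivAt (fun t => f (t, y)) (fderiv ℝ f (x, y) (1, 0)) x := by
  have h1 : HasDerivAt (fun t : ℝ => (t, y)) ((1:ℝ), (0:ℝ)) x :=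
    (hasDerivAt_id x).prodMk (hasDerivAt_const x y)
  exact ((hf (x, y)).hasFDerivAt.comp_hasDerivAt x h1)

lemma slice2 {f : ℝ × ℝ → ℝ} (hf : Differentiable ℝ f) (x y : ℝ) :
    HasDerivAt (fun t => f (x, t)) (fderiv ℝ f (x, y) (0, 1)) y := by
  have h1 : HasDerivAt (fun t : ℝ => (x, t)) ((0:ℝ), (1:ℝ)) y :=
    (hasDerivAt_const y x).prodMk (hasDerivAt_id y)
  exact ((hf (x, y)).hasFDerivAt.comp_hasDerivAt y h1)

lemma pd1_eq_s10 {f : ℝ × ℝ → ℝ} (hf : Differentiable ℝ f) :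
    pd1 f = fun p => fderiv ℝ f p (1, 0) := by
  funext p
  exact (slice1 hf p.1 p.2).deriv

lemma pd2_eq_s10 {f : ℝ × ℝ → ℝ} (hf : Differentiable ℝ f) :
    pd2 f = fun p => fderiv ℝ f p (0, 1) := by
  funext p
  exact (slice2 hf p.1 p.2).deriv

lemma fderiv_eval {f : ℝ × ℝ → ℝ} (hf : ContDiff ℝ 2 f) (v w : ℝ × ℝ) (p : ℝ × ℝ) :
    fderiv ℝ (fun q => fderiv ℝ f q v) p w = (fderiv ℝ (fderiv ℝ f) p w) v := by
  have hd : DifferentiableAt ℝ (fderiv ℝ f) p :=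
    ((hf.fderiv_right (m := 1) (le_refl _)).differentiable (by norm_num)) p
  have h := ((ContinuousLinearMap.apply ℝ ℝ v).hasFDerivAt.comp p hd.hasFDerivAt)
  have h' : HasFDerivAt (fun q => fderiv ℝ f q v)
      (((ContinuousLinearMap.apply ℝ ℝ v).comp (fderiv ℝ (fderiv ℝ f) p))) p := h
  rw [h'.fderiv]
  rfl

lemma mixed_eq {f : ℝ × ℝ → ℝ} (hf : ContDiff ℝ 2 f) (p : ℝ × ℝ) :
    fderiv ℝ (fun q => fderiv ℝ f q (1,0)) p (0,1)
      = fderiv ℝ (fun q => fderiv ℝ f q (0,1)) p (1,0) := by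
  rw [fderiv_eval hf, fderiv_eval hf]
  have hd : HasFDerivAt (fderiv ℝ f) (fderiv ℝ (fderiv ℝ f) p) p :=
    (((hf.fderiv_right (m := 1) (le_refl _)).differentiable (by norm_num)) p).hasFDerivAt
  exact (second_derivative_symmetric (fun q => (hf.differentiable (by norm_num) q).hasFDerivAt)
    hd (1,0) (0,1)).symm

lemma cont_pd1 {f : ℝ × ℝ → ℝ} (hf : ContDiff ℝ 2 f) : Continuous (pd1 f) := by
  rw [pd1_eq_s10 (hf.differentiable (by norm_num))]
  exact (ContinuousLinearMap.apply ℝ ℝ ((1:ℝ),(0:ℝ))).continuous.comp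
    (hf.continuous_fderiv (by norm_num))

lemma contDiff_pd2_s10 {f : ℝ × ℝ → ℝ} (hf : ContDiff ℝ 2 f) : ContDiff ℝ 1 (pd2 f) := by
  rw [pd2_eq_s10 (hf.differentiable (by norm_num))]
  exact (ContinuousLinearMap.apply ℝ ℝ ((0:ℝ),(1:ℝ))).contDiff.comp
    (hf.fderiv_right (le_refl _))

lemma contDiff_pd1 {f : ℝ × ℝ → ℝ} (hf : ContDiff ℝ 2 f) : ContDiff ℝ 1 (pd1 f) := by
  rw [pd1_eq_s10 (hf.differentiable (by norm_num))]
  exact (ContinuousLinearMap.apply ℝ ℝ ((1:ℝ),(0:ℝ))).contDiff.comp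
    (hf.fderiv_right (le_refl _))

-- key: derivative in y of pd1 f is pd1 (pd2 f)
lemma hasDeriv_pd1_y {f : ℝ × ℝ → ℝ} (hf : ContDiff ℝ 2 f) (x y : ℝ) :
    HasDerivAt (fun t => pd1 f (x, t)) (pd1 (pd2 f) (x, y)) y := by
  have h1 : Differentiable ℝ (pd1 f) := (contDiff_pd1 hf).differentiable (by norm_num)
  have h2 : Differentiable ℝ (pd2 f) := (contDiff_pd2_s10 hf).differentiable (by norm_num)
  have h := slice2 h1 x y
  have e : fderiv ℝ (pd1 f) (x, y) (0,1) = pd1 (pd2 f) (x, y) := by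
    rw [pd1_eq_s10 (hf.differentiable (by norm_num))]
    rw [mixed_eq hf]
    rw [pd1_eq_s10 h2, pd2_eq_s10 (hf.differentiable (by norm_num))]
  rwa [e] at h

lemma cont_pd12 {f : ℝ × ℝ → ℝ} (hf : ContDiff ℝ 2 f) : Continuous (pd1 (pd2 f)) := by
  rw [pd1_eq_s10 ((contDiff_pd2_s10 hf).differentiable (by norm_num))]
  exact (ContinuousLinearMap.apply ℝ ℝ ((1:ℝ),(0:ℝ))).continuous.comp
    ((contDiff_pd2_s10 hf).continuous_fderiv (by norm_num))

end Calc

lemma periodic_deriv (g : ℝ → ℝ) (h : Function.Periodic g 1) :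
    Function.Periodic (deriv g) 1 := by
  intro x
  have e : (fun t => g (t + 1)) = g := funext h
  calc deriv g (x + 1) = deriv (fun t => g (t + 1)) x := (deriv_comp_add_const g 1 x).symm
    _ = deriv g x := by rw [e]

lemma exists_zero {g : ℝ → ℝ} (hg : Continuous g) (h0 : ∫ t in (0:ℝ)..1, g t = 0) :
    ∃ x₀ ∈ Set.Icc (0:ℝ) 1, g x₀ = 0 := by
  by_contra hc
  push_neg at hc
  have hi : IntervalIntegrable g volume 0 1 := hg.intervalIntegrable 0 1
  rcases lt_or_gt_of_ne (hc 0 (by norm_num)) with hneg | hpos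
  · -- g 0 < 0 ; show all of g < 0 on Icc, then integral < 0
    have hall : ∀ x ∈ Set.Icc (0:ℝ) 1, g x < 0 := by
      intro x hx
      rcases lt_or_gt_of_ne (hc x hx) with h | h
      · exact h
      · exfalso
        have : (0:ℝ) ∈ Set.uIcc (g 0) (g x) := by
          rw [Set.mem_uIcc]; left; exact ⟨hneg.le, h.le⟩
        obtain ⟨c, hc1, hc2⟩ := intermediate_value_uIcc (hg.continuousOn (s := Set.uIcc 0 x)) this
        have : c ∈ Set.Icc (0:ℝ) 1 := by
          rcases Set.mem_uIcc.1 hc1 with h' | h'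
          · exact ⟨h'.1, le_trans h'.2 hx.2⟩
          · exact ⟨le_trans hx.1 h'.1, le_trans h'.2 (by norm_num)⟩
        exact hc c this hc2
    have : ∫ t in (0:ℝ)..1, (-g) t > 0 := by
      apply intervalIntegral.intervalIntegral_pos_of_pos_on (hi.neg)
      · intro x hx
        simp only [Pi.neg_apply, neg_pos]
        exact hall x ⟨hx.1.le, hx.2.le⟩
      · norm_num
    simp only [Pi.neg_apply] at this
    rw [intervalIntegral.integral_neg, h0] at this
    simp at this
  · have hall : ∀ x ∈ Set.Icc (0:ℝ) 1, 0 < g x := by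
      intro x hx
      rcases lt_or_gt_of_ne (hc x hx) with h | h
      · exfalso
        have : (0:ℝ) ∈ Set.uIcc (g 0) (g x) := by
          rw [Set.mem_uIcc]; right; exact ⟨h.le, hpos.le⟩
        obtain ⟨c, hc1, hc2⟩ := intermediate_value_uIcc (hg.continuousOn (s := Set.uIcc 0 x)) this
        have : c ∈ Set.Icc (0:ℝ) 1 := by
          rcases Set.mem_uIcc.1 hc1 with h' | h'
          · exact ⟨h'.1, le_trans h'.2 hx.2⟩
          · exact ⟨le_trans hx.1 h'.1, le_trans h'.2 (by norm_num)⟩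
        exact hc c this hc2
      · exact h
    have : ∫ t in (0:ℝ)..1, g t > 0 := by
      apply intervalIntegral.intervalIntegral_pos_of_pos_on hi
      · intro x hx; exact hall x ⟨hx.1.le, hx.2.le⟩
      · norm_num
    rw [h0] at this
    simp at this

lemma slice1' {f : ℝ × ℝ → ℝ} (hf : Differentiable ℝ f) (x y : ℝ) :
    HasDerivAt (fun t => f (t, y)) (pd1 f (x, y)) x := by
  have := slice1 hf x y
  rwa [show fderiv ℝ f (x, y) (1, 0) = pd1 f (x, y) by rw [pd1_eq_s10 hf]] at this

lemma slice2' {f : ℝ × ℝ → ℝ} (hf : Differentiable ℝ f) (x y : ℝ) :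
    HasDerivAt (fun t => f (x, t)) (pd2 f (x, y)) y := by
  have := slice2 hf x y
  rwa [show fderiv ℝ f (x, y) (0, 1) = pd2 f (x, y) by rw [pd2_eq_s10 hf]] at this

lemma memL2_restrict {g : ℝ → ℝ} (hg : Continuous g) :
    MemLp g 2 ((volume : Measure ℝ).restrict (Set.Ioc (0:ℝ) 1)) := by
  have hfin : IsFiniteMeasure ((volume : Measure ℝ).restrict (Set.Ioc (0:ℝ) 1)) := by
    constructor
    rw [Measure.restrict_apply_univ]
    simp
  obtain ⟨M, hM⟩ := (isCompact_Icc (a := (0:ℝ)) (b := 1)).exists_bound_of_continuousOn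
    hg.continuousOn
  have htop : MemLp g ⊤ ((volume : Measure ℝ).restrict (Set.Ioc (0:ℝ) 1)) := by
    apply memLp_top_of_bound hg.aestronglyMeasurable M
    rw [ae_restrict_iff' measurableSet_Ioc]
    filter_upwards with t ht
    exact hM t ⟨ht.1.le, ht.2⟩
  exact htop.mono_exponent le_top

lemma CSx {g h : ℝ → ℝ} (hgc : Continuous g) (hhc : Continuous h) :
    ∫ t in (0:ℝ)..1, |g t| * |h t| ≤
      (∫ t in (0:ℝ)..1, g t ^ 2) ^ (1/2:ℝ) * (∫ t in (0:ℝ)..1, h t ^ 2) ^ (1/2:ℝ) := by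
  have h01 : (0:ℝ) ≤ 1 := by norm_num
  rw [intervalIntegral.integral_of_le h01, intervalIntegral.integral_of_le h01,
    intervalIntegral.integral_of_le h01]
  have hcs := integral_mul_norm_le_Lp_mul_Lq
    (μ := (volume : Measure ℝ).restrict (Set.Ioc (0:ℝ) 1)) (f := g) (g := h)
    (p := 2) (q := 2) (by constructor <;> norm_num)
    (by simpa using memL2_restrict hgc) (by simpa using memL2_restrict hhc)
  simp only [Real.norm_eq_abs, abs_rpow_two_eq] at hcs
  convert hcs using 3 <;> norm_num
lemma stepA {f : ℝ × ℝ → ℝ} (hper : Per f) (hf : ContDiff ℝ 2 f)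
    (h0 : ∀ y, ∫ t in (0:ℝ)..1, f (t, y) = 0) (x y : ℝ) :
    f (x, y) ^ 2 ≤ 2 * ∫ t in (0:ℝ)..1, |f (t, y)| * |pd1 f (t, y)| := by
  set g : ℝ → ℝ := fun t => f (t, y) with hg
  set g1 : ℝ → ℝ := fun t => pd1 f (t, y) with hg1
  have hdiff : Differentiable ℝ f := hf.differentiable (by norm_num)
  have hgc : Continuous g := hf.continuous.comp (continuous_id.prodMk continuous_const)
  have hg1c : Continuous g1 := (cont_pd1 hf).comp (continuous_id.prodMk continuous_const)
  have hder : ∀ t, HasDerivAt g (g1 t) t := fun t => slice1' hdiff t y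
  have hgper : Function.Periodic g 1 := fun t => hper t y
  have hg1eq : g1 = deriv g := by
    funext t
    exact ((hder t).deriv).symm
  have hg1per : Function.Periodic g1 1 := by rw [hg1eq]; exact periodic_deriv g hgper
  obtain ⟨x₀, hx₀mem, hx₀⟩ := exists_zero hgc (h0 y)
  set n : ℤ := ⌊x - x₀⌋ with hn
  set x' : ℝ := x - n with hx'
  have hgx' : g x' = g x := by
    have := hgper.sub_int_mul_eq (x := x) n
    simpa using this
  have hlb : x₀ ≤ x' := by
    have := Int.floor_le (x - x₀)
    rw [hx']; linarith
  have hub : x' ≤ x₀ + 1 := by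
    have := Int.lt_floor_add_one (x - x₀)
    rw [hx']; linarith
  have hFTC : ∫ t in x₀..x', 2 * g t * g1 t = g x' ^ 2 - g x₀ ^ 2 := by
    have h1 : ∀ t ∈ Set.uIcc x₀ x', HasDerivAt (fun s => g s ^ 2) (2 * g t * g1 t) t := by
      intro t _
      have h := (hder t).fun_pow 2
      refine h.congr_deriv ?_
      push_cast
      ring
    have h2 : IntervalIntegrable (fun t => 2 * g t * g1 t) volume x₀ x' :=
      Continuous.intervalIntegrable (by continuity) _ _
    exact intervalIntegral.integral_eq_sub_of_hasDerivAt h1 h2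
  have habs : Continuous fun t => |2 * g t * g1 t| := by continuity
  have step1 : g x' ^ 2 ≤ ∫ t in x₀..x', |2 * g t * g1 t| := by
    have h0' : g x₀ ^ 2 = 0 := by rw [hx₀]; ring
    calc g x' ^ 2 = (∫ t in x₀..x', 2 * g t * g1 t) + g x₀ ^ 2 := by rw [hFTC]; ring
      _ = ∫ t in x₀..x', 2 * g t * g1 t := by rw [h0']; ring
      _ ≤ ∫ t in x₀..x', |2 * g t * g1 t| := by
          apply intervalIntegral.integral_mono_on hlb
            (Continuous.intervalIntegrable (by continuity) _ _)
            (habs.intervalIntegrable _ _)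
          intro t _
          exact le_abs_self _
  have step2 : ∫ t in x₀..x', |2 * g t * g1 t| ≤ ∫ t in x₀..x₀+1, |2 * g t * g1 t| := by
    apply intervalIntegral.integral_mono_interval (le_refl x₀) hlb hub
    · filter_upwards with t
      exact abs_nonneg _
    · exact habs.intervalIntegrable _ _
  have hperabs : Function.Periodic (fun t => |2 * g t * g1 t|) 1 := by
    intro t
    simp only [hgper t, hg1per t]
  have step3 : ∫ t in x₀..x₀+1, |2 * g t * g1 t| = ∫ t in (0:ℝ)..1, |2 * g t * g1 t| := by
    have := hperabs.intervalIntegral_add_eq x₀ 0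
    simpa using this
  have step4 : ∫ t in (0:ℝ)..1, |2 * g t * g1 t| = 2 * ∫ t in (0:ℝ)..1, |g t| * |g1 t| := by
    rw [← intervalIntegral.integral_const_mul]
    congr 1
    funext t
    rw [abs_mul, abs_mul]
    simp [abs_of_nonneg]
    ring
  have : f (x, y) ^ 2 = g x' ^ 2 := by rw [hgx']
  rw [this, ← step4, ← step3]
  exact le_trans step1 step2


lemma integrable_abs_mul {u w : ℝ × ℝ → ℝ} (hu_cont : Continuous u) (hw_cont : Continuous w)
    (hu2 : MemLp u 2 μΩ) (hw2 : MemLp w 2 μΩ) :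
    Integrable (fun p => |u p| * |w p|) μΩ := by
  have hsum : Integrable (fun p => (u p ^ 2 + w p ^ 2) / 2) μΩ :=
    (hu2.integrable_sq.add hw2.integrable_sq).div_const 2
  apply hsum.mono' ((hu_cont.abs.mul hw_cont.abs).aestronglyMeasurable)
  filter_upwards with p
  simp only [Pi.mul_apply]
  rw [Real.norm_eq_abs, abs_of_nonneg (by positivity)]
  nlinarith [sq_nonneg (|u p| - |w p|), sq_abs (u p), sq_abs (w p)]

lemma stepB {u w : ℝ × ℝ → ℝ} (hu_cont : Continuous u) (hw_cont : Continuous w)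
    (hder : ∀ x t, HasDerivAt (fun s => u (x, s)) (w (x, t)) t)
    (hu2 : MemLp u 2 μΩ) (hw2 : MemLp w 2 μΩ) (y : ℝ) :
    ∫ t in (0:ℝ)..1, u (t, y) ^ 2 ≤ 2 * ∫ p, |u p| * |w p| ∂μΩ := by
  set ν0 : Measure ℝ := (volume : Measure ℝ).restrict (Set.Ioc (0:ℝ) 1) with hν0
  set K : ℝ := ∫ p, |u p| * |w p| ∂μΩ with hK
  set G : ℝ × ℝ → ℝ := fun p => |2 * u p * w p| with hG
  have hprod : Integrable (fun p => |u p| * |w p|) μΩ :=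
    integrable_abs_mul hu_cont hw_cont hu2 hw2
  have hGeq : G = fun p => 2 * (|u p| * |w p|) := by
    funext p
    show |2 * u p * w p| = _
    rw [abs_mul, abs_mul, abs_two]
    ring
  have hGint : Integrable G μΩ := by rw [hGeq]; exact hprod.const_mul 2
  have hGK : ∫ p, G p ∂μΩ = 2 * K := by rw [hGeq, integral_const_mul]
  set A2 : ℝ → ℝ := fun s => ∫ t in (0:ℝ)..1, u (t, s) ^ 2 with hA2
  -- pointwise in x bound
  have hptwise : ∀ x y₂ : ℝ, u (x, y) ^ 2 ≤ u (x, y₂) ^ 2 +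
      ∫ t in Set.uIoc y₂ y, G (x, t) := by
    intro x y₂
    have hFTC : ∫ t in y₂..y, 2 * u (x, t) * w (x, t) = u (x, y) ^ 2 - u (x, y₂) ^ 2 := by
      have h1 : ∀ t ∈ Set.uIcc y₂ y, HasDerivAt (fun s => u (x, s) ^ 2)
          (2 * u (x, t) * w (x, t)) t := by
        intro t _
        have h := (hder x t).fun_pow 2
        refine h.congr_deriv ?_
        push_cast
        ring
      have h2 : IntervalIntegrable (fun t => 2 * u (x, t) * w (x, t)) volume y₂ y := by
        apply Continuous.intervalIntegrable
        exact (continuous_const.mul (hu_cont.comp (continuous_const.prodMk continuous_id))).mul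
          (hw_cont.comp (continuous_const.prodMk continuous_id))
      exact intervalIntegral.integral_eq_sub_of_hasDerivAt h1 h2
    have habs : |∫ t in y₂..y, 2 * u (x, t) * w (x, t)| ≤ ∫ t in Set.uIoc y₂ y, G (x, t) := by
      have := intervalIntegral.norm_integral_le_integral_norm_uIoc
        (f := fun t => 2 * u (x, t) * w (x, t)) (a := y₂) (b := y) (μ := volume)
      simp only [Real.norm_eq_abs] at this
      exact this
    nlinarith [le_abs_self (∫ t in y₂..y, 2 * u (x, t) * w (x, t)), hFTC]
  -- integrating in x
  have hbox : ∀ y₂ : ℝ, A2 y ≤ A2 y₂ + 2 * K := by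
    intro y₂
    set J : Set ℝ := Set.uIoc y₂ y with hJ
    have hGboxInt : Integrable G (ν0.prod (volume.restrict J)) := by
      have : ν0.prod (volume.restrict J) = μΩ.restrict (Set.univ ×ˢ J) := by
        rw [hν0, μΩ]
        rw [← Measure.prod_restrict, Measure.restrict_univ]
      rw [this]
      exact hGint.restrict
    have hinner_int : Integrable (fun x => ∫ t in J, G (x, t)) ν0 :=
      hGboxInt.integral_prod_left
    have hiter : ∫ x, (∫ t in J, G (x, t)) ∂ν0 = ∫ p, G p ∂(ν0.prod (volume.restrict J)) :=
      MeasureTheory.integral_integral hGboxInt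
    have hub : ∫ p, G p ∂(ν0.prod (volume.restrict J)) ≤ ∫ p, G p ∂μΩ := by
      have he : ν0.prod (volume.restrict J) = μΩ.restrict (Set.univ ×ˢ J) := by
        rw [hν0, μΩ, ← Measure.prod_restrict, Measure.restrict_univ]
      rw [he]
      exact setIntegral_le_integral hGint
        (Filter.Eventually.of_forall fun p => abs_nonneg _)
    have hsliceint : ∀ s : ℝ, Integrable (fun t => u (t, s) ^ 2) ν0 := by
      intro s
      rw [hν0]
      exact Continuous.integrableOn_Ioc
        ((hu_cont.comp (continuous_id.prodMk continuous_const)).pow 2)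
    have hint_interval : ∀ s : ℝ, A2 s = ∫ x, u (x, s) ^ 2 ∂ν0 := by
      intro s
      have e : A2 s = ∫ t in (0:ℝ)..1, u (t, s) ^ 2 := rfl
      rw [e, intervalIntegral.integral_of_le (by norm_num : (0:ℝ) ≤ 1)]
    have : A2 y ≤ ∫ x, (u (x, y₂) ^ 2 + ∫ t in J, G (x, t)) ∂ν0 := by
      rw [hint_interval y]
      apply integral_mono ((hsliceint y)) ((hsliceint y₂).add hinner_int)
      intro x
      exact hptwise x y₂
    rw [integral_add (hsliceint y₂) hinner_int, hiter] at this
    calc A2 y ≤ (∫ x, u (x, y₂) ^ 2 ∂ν0) + ∫ p, G p ∂(ν0.prod (volume.restrict J)) := this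
      _ ≤ A2 y₂ + 2 * K := by
          rw [hint_interval y₂]
          exact add_le_add_right (le_of_le_of_eq hub hGK) _
  -- the ε argument
  have heps : ∀ ε : ℝ, 0 < ε → ∃ y₂ : ℝ, A2 y₂ < ε := by
    intro ε hε
    by_contra hcon
    push_neg at hcon
    have hA2int : Integrable (fun s => ∫ x, u (x, s) ^ 2 ∂ν0) (volume : Measure ℝ) := by
      have := hu2.integrable_sq
      exact this.integral_prod_right
    have hconst : Integrable (fun _ : ℝ => ε) (volume : Measure ℝ) := by
      apply hA2int.mono' aestronglyMeasurable_const
      filter_upwards with s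
      rw [Real.norm_eq_abs, abs_of_pos hε]
      have h2 : ε ≤ ∫ t in (0:ℝ)..1, u (t, s) ^ 2 := hcon s
      rw [intervalIntegral.integral_of_le (by norm_num : (0:ℝ) ≤ 1)] at h2
      exact h2
    rw [integrable_const_iff] at hconst
    rcases hconst with h | h
    · exact hε.ne' h
    · simpa using (measure_lt_top (volume : Measure ℝ) Set.univ)
  -- conclude
  have : ∀ ε : ℝ, 0 < ε → A2 y ≤ 2 * K + ε := by
    intro ε hε
    obtain ⟨y₂, hy₂⟩ := heps ε hε
    have := hbox y₂
    linarith
  have := le_of_forall_pos_le_add this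
  linarith [this]

lemma rpow_quarter_sq (Q : ℝ) (hQ : 0 ≤ Q) : (Q ^ (1/4:ℝ)) ^ 2 = Q ^ (1/2:ℝ) := by
  rw [← Real.rpow_natCast (Q ^ (1/4:ℝ)) 2, ← Real.rpow_mul hQ]
  norm_num

/-- Anisotropic `L^∞` bound for functions with zero horizontal average:
`‖f‖_{L^∞} ≤ C ‖f‖^{1/4} ‖∂₁f‖^{1/4} ‖∂₂f‖^{1/4} ‖∂₁∂₂f‖^{1/4}`. -/
theorem stmt10 : ∃ C : ℝ, 0 < C ∧ ∀ f : ℝ × ℝ → ℝ,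
    Per f → ContDiff ℝ 2 f → (∀ y, havg f y = 0) →
    MemLp f 2 μΩ → MemLp (pd1 f) 2 μΩ → MemLp (pd2 f) 2 μΩ →
    MemLp (pd1 (pd2 f)) 2 μΩ →
    eLpNorm f ⊤ μΩ ≤ ENNReal.ofReal
      (C * (eLpNorm f 2 μΩ).toReal ^ (1/4 : ℝ) *
        (eLpNorm (pd1 f) 2 μΩ).toReal ^ (1/4 : ℝ) *
        (eLpNorm (pd2 f) 2 μΩ).toReal ^ (1/4 : ℝ) *
        (eLpNorm (pd1 (pd2 f)) 2 μΩ).toReal ^ (1/4 : ℝ)) := by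
  refine ⟨2, by norm_num, ?_⟩
  intro f hper hf h0 hm0 hm1 hm2 hm12
  have hdiff : Differentiable ℝ f := hf.differentiable (by norm_num)
  have h0' : ∀ y, ∫ t in (0:ℝ)..1, f (t, y) = 0 := h0
  set N0 : ℝ := (eLpNorm f 2 μΩ).toReal with hN0
  set N1 : ℝ := (eLpNorm (pd1 f) 2 μΩ).toReal with hN1
  set N2 : ℝ := (eLpNorm (pd2 f) 2 μΩ).toReal with hN2
  set N12 : ℝ := (eLpNorm (pd1 (pd2 f)) 2 μΩ).toReal with hN12
  have hN0n : 0 ≤ N0 := ENNReal.toReal_nonneg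
  have hN1n : 0 ≤ N1 := ENNReal.toReal_nonneg
  have hN2n : 0 ≤ N2 := ENNReal.toReal_nonneg
  have hN12n : 0 ≤ N12 := ENNReal.toReal_nonneg
  have hfc : Continuous f := hf.continuous
  have h1c : Continuous (pd1 f) := cont_pd1 hf
  have h2c : Continuous (pd2 f) := (contDiff_pd2_s10 hf).continuous
  have h12c : Continuous (pd1 (pd2 f)) := cont_pd12 hf
  -- bounds in the y-direction
  have hA : ∀ y, ∫ t in (0:ℝ)..1, f (t, y) ^ 2 ≤ 2 * (N0 * N2) := by
    intro y
    calc ∫ t in (0:ℝ)..1, f (t, y) ^ 2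
        ≤ 2 * ∫ p, |f p| * |pd2 f p| ∂μΩ :=
          stepB hfc h2c (fun x t => slice2' hdiff x t) hm0 hm2 y
      _ ≤ 2 * (N0 * N2) := by
          have := CS2 hm0 hm2
          linarith
  have hB : ∀ y, ∫ t in (0:ℝ)..1, pd1 f (t, y) ^ 2 ≤ 2 * (N1 * N12) := by
    intro y
    calc ∫ t in (0:ℝ)..1, pd1 f (t, y) ^ 2
        ≤ 2 * ∫ p, |pd1 f p| * |pd1 (pd2 f) p| ∂μΩ :=
          stepB h1c h12c (fun x t => hasDeriv_pd1_y hf x t) hm1 hm12 y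
      _ ≤ 2 * (N1 * N12) := by
          have := CS2 hm1 hm12
          linarith
  set Q : ℝ := N0 * N1 * N2 * N12 with hQdef
  have hQn : 0 ≤ Q := by positivity
  set P : ℝ := N0 ^ (1/4:ℝ) * N1 ^ (1/4:ℝ) * N2 ^ (1/4:ℝ) * N12 ^ (1/4:ℝ) with hPdef
  have hPn : 0 ≤ P := by positivity
  have hPQ : P = Q ^ (1/4:ℝ) := by
    rw [hPdef, hQdef, Real.mul_rpow (by positivity) hN12n,
      Real.mul_rpow (by positivity) hN2n, Real.mul_rpow hN0n hN1n]
  -- pointwise bound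
  have hbound : ∀ x y : ℝ, |f (x, y)| ≤ 2 * P := by
    intro x y
    have h01 : (0:ℝ) ≤ 1 := by norm_num
    have hA2n : 0 ≤ ∫ t in (0:ℝ)..1, f (t, y) ^ 2 :=
      intervalIntegral.integral_nonneg h01 (fun t _ => sq_nonneg _)
    have hB2n : 0 ≤ ∫ t in (0:ℝ)..1, pd1 f (t, y) ^ 2 :=
      intervalIntegral.integral_nonneg h01 (fun t _ => sq_nonneg _)
    have hcs := CSx (g := fun t => f (t, y)) (h := fun t => pd1 f (t, y))
      (hfc.comp (continuous_id.prodMk continuous_const))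
      (h1c.comp (continuous_id.prodMk continuous_const))
    have hsq : f (x, y) ^ 2 ≤ 4 * Q ^ (1/2:ℝ) := by
      have h1 := stepA hper hf h0' x y
      have h2 : (∫ t in (0:ℝ)..1, f (t, y) ^ 2) ^ (1/2:ℝ) ≤ (2 * (N0 * N2)) ^ (1/2:ℝ) :=
        Real.rpow_le_rpow hA2n (hA y) (by norm_num)
      have h3 : (∫ t in (0:ℝ)..1, pd1 f (t, y) ^ 2) ^ (1/2:ℝ) ≤ (2 * (N1 * N12)) ^ (1/2:ℝ) :=
        Real.rpow_le_rpow hB2n (hB y) (by norm_num)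
      have h4 : (2 * (N0 * N2)) ^ (1/2:ℝ) * (2 * (N1 * N12)) ^ (1/2:ℝ) = 2 * Q ^ (1/2:ℝ) := by
        rw [← Real.mul_rpow (by positivity) (by positivity)]
        have e : 2 * (N0 * N2) * (2 * (N1 * N12)) = 4 * Q := by rw [hQdef]; ring
        rw [e, Real.mul_rpow (by norm_num) hQn]
        congr 1
        rw [show (4:ℝ) = 2 ^ (2:ℕ) by norm_num, ← Real.rpow_natCast 2 2,
          ← Real.rpow_mul (by norm_num)]
        norm_num
      have h5 : (∫ t in (0:ℝ)..1, |f (t, y)| * |pd1 f (t, y)|) ≤ 2 * Q ^ (1/2:ℝ) := by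
        calc (∫ t in (0:ℝ)..1, |f (t, y)| * |pd1 f (t, y)|)
            ≤ (∫ t in (0:ℝ)..1, f (t, y) ^ 2) ^ (1/2:ℝ) *
              (∫ t in (0:ℝ)..1, pd1 f (t, y) ^ 2) ^ (1/2:ℝ) := hcs
          _ ≤ (2 * (N0 * N2)) ^ (1/2:ℝ) * (2 * (N1 * N12)) ^ (1/2:ℝ) := by
              apply mul_le_mul h2 h3 (Real.rpow_nonneg hB2n _) (Real.rpow_nonneg (by positivity) _)
          _ = 2 * Q ^ (1/2:ℝ) := h4
      linarith
    have hsq' : f (x, y) ^ 2 ≤ (2 * P) ^ 2 := by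
      have : (2 * P) ^ 2 = 4 * Q ^ (1/2:ℝ) := by
        rw [mul_pow, hPQ, rpow_quarter_sq Q hQn]
        norm_num
      linarith
    calc |f (x, y)| = Real.sqrt (f (x, y) ^ 2) := (Real.sqrt_sq_eq_abs _).symm
      _ ≤ Real.sqrt ((2 * P) ^ 2) := Real.sqrt_le_sqrt hsq'
      _ = 2 * P := Real.sqrt_sq (by positivity)
  rw [eLpNorm_exponent_top]
  refine le_trans (eLpNormEssSup_le_of_ae_bound (C := 2 * P) ?_) ?_
  · filter_upwards with p
    rw [Real.norm_eq_abs]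
    exact hbound p.1 p.2
  · apply ENNReal.ofReal_le_ofReal
    rw [hPdef]
    ring_nf
    exact le_refl _
end

section
/- Consequence of Lemma on triple products combined with the strong Poincaré inequality: there is a constant C > 0 such that for any sufficiently regular f on Ω = 𝕋 × ℝ with zero horizontal average and any g, h with g, ∂₂g, h ∈ L²(Ω), one has |∫_Ω f g h dx| ≤ C ‖∂₁f‖_{L²} ‖g‖_{L²}^{1/2} ‖∂₂g‖_{L²}^{1/2} ‖h‖_{L²}. -/
open MeasureTheory Real

open Filter Set


-- helper: coercion of nnnorm squares
lemma sq_enn (x : ℝ) : (‖x‖₊ : ENNReal) ^ (2:ℝ) = ENNReal.ofReal (x ^ 2) := by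
  rw [show ((2:ℝ)) = ((2:ℕ):ℝ) by norm_num, ENNReal.rpow_natCast]
  rw [← enorm_eq_nnnorm, ← ofReal_norm, ← ENNReal.ofReal_pow (norm_nonneg x)]
  congr 1
  rw [Real.norm_eq_abs, sq_abs]

lemma sq_enn' (x : ℝ) : (‖x ^ 2‖₊ : ENNReal) = (‖x‖₊ : ENNReal) ^ (2:ℝ) := by
  rw [sq_enn, ← enorm_eq_nnnorm, ← ofReal_norm, Real.norm_eq_abs, abs_of_nonneg (sq_nonneg x)]

lemma mul_enn (a b : ℝ) : ENNReal.ofReal |a * b| = (‖a‖₊ : ENNReal) * (‖b‖₊ : ENNReal) := by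
  rw [← enorm_eq_nnnorm, ← ofReal_norm, ← enorm_eq_nnnorm, ← ofReal_norm,
    ← ENNReal.ofReal_mul (norm_nonneg a)]
  simp [Real.norm_eq_abs, abs_mul]

-- AE-measurable inner integral
lemma aemeas_inner {α β : Type*} [MeasurableSpace α] [MeasurableSpace β] {μ : Measure α}
    {ν : Measure β} [SFinite ν] {f : α × β → ENNReal} (hf : AEMeasurable f (μ.prod ν)) :
    AEMeasurable (fun x => ∫⁻ y, f (x, y) ∂ν) μ := by
  have h1 : ∀ᵐ z ∂(μ.prod ν), f z = hf.mk f z := hf.ae_eq_mk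
  have h2 := Measure.ae_ae_of_ae_prod h1
  refine (Measurable.lintegral_prod_right' (ν := ν) (f := hf.mk f) hf.measurable_mk).aemeasurable.congr ?_
  filter_upwards [h2] with x hx
  exact (lintegral_congr_ae hx).symm

lemma mul_enn' (a : ℝ) : ENNReal.ofReal |a| = (‖a‖₊ : ENNReal) := by
  rw [← enorm_eq_nnnorm, ← ofReal_norm, Real.norm_eq_abs]

lemma agmon1d (u : ℝ → ℝ) (hu : Differentiable ℝ u)
    (h2 : Integrable (fun y => u y ^ 2))
    (hw : Integrable (fun y => u y * deriv u y)) (y : ℝ) :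
    u y ^ 2 ≤ 2 * ∫ t, |u t * deriv u t| := by
  have hderiv : ∀ t, HasDerivAt (fun s => u s ^ 2) (2 * (u t * deriv u t)) t := by
    intro t
    have := ((hu t).hasDerivAt).pow 2
    simpa [mul_comm, mul_assoc, mul_left_comm, Pi.pow_def] using this
  have hw2 : Integrable (fun t => 2 * (u t * deriv u t)) := hw.const_mul 2
  have hftc : ∀ a : ℝ, u y ^ 2 - u a ^ 2 = ∫ t in a..y, 2 * (u t * deriv u t) := by
    intro a
    rw [intervalIntegral.integral_eq_sub_of_hasDerivAt (fun t _ => hderiv t)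
      hw2.intervalIntegrable]
  have htend : Tendsto (fun a : ℝ => ∫ t in a..y, 2 * (u t * deriv u t)) atBot
      (nhds (∫ t in Iic y, 2 * (u t * deriv u t))) :=
    intervalIntegral_tendsto_integral_Iic y hw2.integrableOn tendsto_id
  have htendu : Tendsto (fun a : ℝ => u a ^ 2) atBot
      (nhds (u y ^ 2 - ∫ t in Iic y, 2 * (u t * deriv u t))) := by
    have : (fun a : ℝ => u a ^ 2) = fun a => u y ^ 2 - ∫ t in a..y, 2 * (u t * deriv u t) := by
      funext a; rw [← hftc a]; ring
    rw [this]
    exact tendsto_const_nhds.sub htend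
  set L := u y ^ 2 - ∫ t in Iic y, 2 * (u t * deriv u t) with hL
  have hL0 : L ≤ 0 := by
    by_contra hpos
    push_neg at hpos
    have hev : ∀ᶠ a in atBot, L / 2 < u a ^ 2 :=
      htendu.eventually (eventually_gt_nhds (by linarith))
    obtain ⟨A, hA⟩ := eventually_atBot.mp hev
    have hfin : (∫⁻ t in Iic A, ENNReal.ofReal (u t ^ 2)) < ⊤ := by
      have h2' : IntegrableOn (fun t => u t ^ 2) (Iic A) := h2.integrableOn
      have := h2'.2
      rw [hasFiniteIntegral_iff_ofReal ?_] at this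
      · exact this
      · filter_upwards with t; positivity
    have hge : (∫⁻ t in Iic A, ENNReal.ofReal (L / 2)) ≤ ∫⁻ t in Iic A, ENNReal.ofReal (u t ^ 2) := by
      apply setLIntegral_mono' measurableSet_Iic
      intro t ht
      exact ENNReal.ofReal_le_ofReal (hA t ht).le
    rw [setLIntegral_const, Real.volume_Iic] at hge
    have : ENNReal.ofReal (L / 2) * ⊤ = ⊤ := by
      apply ENNReal.mul_top
      simp [ENNReal.ofReal_eq_zero]
      linarith
    rw [this] at hge
    exact absurd (lt_of_le_of_lt hge hfin) (by simp)
  have habs : ∫ t in Iic y, 2 * (u t * deriv u t) ≤ ∫ t, 2 * |u t * deriv u t| := by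
    calc ∫ t in Iic y, 2 * (u t * deriv u t) ≤ ∫ t in Iic y, 2 * |u t * deriv u t| := by
          apply setIntegral_mono_on (hw2.integrableOn)
            ((hw.abs.const_mul 2).integrableOn) measurableSet_Iic
          intro t _; have := le_abs_self (u t * deriv u t); linarith
      _ ≤ ∫ t, 2 * |u t * deriv u t| := by
          apply setIntegral_le_integral (hw.abs.const_mul 2)
          filter_upwards with t
          positivity
  have hrw : u y ^ 2 = L + ∫ t in Iic y, 2 * (u t * deriv u t) := by rw [hL]; ring
  have h2int : (∫ t, 2 * |u t * deriv u t|) = 2 * ∫ t, |u t * deriv u t| := integral_const_mul 2 _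
  rw [hrw]
  linarith [h2int ▸ habs]

lemma poin1d (v : ℝ → ℝ) (hv : Differentiable ℝ v) (h0 : ∫ x in (0:ℝ)..1, v x = 0)
    (hint : IntegrableOn (deriv v) (Set.Ioc 0 1)) (x : ℝ) (hx : x ∈ Set.Icc (0:ℝ) 1) :
    |v x| ≤ ∫ s in Set.Ioc (0:ℝ) 1, |deriv v s| := by
  obtain ⟨hx0, hx1⟩ := hx
  have habs : IntegrableOn (fun s => |deriv v s|) (Set.Ioc 0 1) := hint.abs
  -- pointwise: for t ∈ Icc 0 1, |v x - v t| ≤ ∫ |deriv v| over Ioc 0 1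
  have key : ∀ t ∈ Set.Icc (0:ℝ) 1, |v x - v t| ≤ ∫ s in Set.Ioc (0:ℝ) 1, |deriv v s| := by
    intro t ⟨ht0, ht1⟩
    have hsub : Set.uIoc t x ⊆ Set.Ioc (0:ℝ) 1 := by
      rw [Set.uIoc]
      intro s hs
      constructor
      · exact lt_of_le_of_lt (le_min ht0 hx0) hs.1
      · exact le_trans hs.2 (max_le ht1 hx1)
    have hii : IntervalIntegrable (deriv v) volume t x :=
      intervalIntegrable_iff.mpr (hint.mono_set hsub)
    have hftc : v x - v t = ∫ s in t..x, deriv v s :=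
      (intervalIntegral.integral_deriv_eq_sub (fun s _ => hv s) hii).symm
    rw [hftc]
    calc |∫ s in t..x, deriv v s| ≤ ∫ s in Set.uIoc t x, |deriv v s| := by
          simpa using intervalIntegral.norm_integral_le_integral_norm_uIoc (f := deriv v) (a := t) (b := x)
      _ ≤ ∫ s in Set.Ioc (0:ℝ) 1, |deriv v s| := by
          apply setIntegral_mono_set habs
          · filter_upwards with s using abs_nonneg _
          · exact HasSubset.Subset.eventuallyLE hsub
  -- v x = ∫ t in 0..1, (v x - v t)
  have hvc : Continuous v := hv.continuous
  have hvint : IntervalIntegrable v volume 0 1 := (hvc.intervalIntegrable 0 1)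
  have hrw : v x = ∫ t in (0:ℝ)..1, (v x - v t) := by
    rw [intervalIntegral.integral_sub (intervalIntegrable_const) hvint, h0,
      intervalIntegral.integral_const]
    simp
  rw [hrw]
  calc |∫ t in (0:ℝ)..1, (v x - v t)| ≤ ∫ t in (0:ℝ)..1, |v x - v t| := by
        rw [intervalIntegral.integral_of_le (by norm_num : (0:ℝ) ≤ 1),
          intervalIntegral.integral_of_le (by norm_num : (0:ℝ) ≤ 1)]
        simpa using norm_integral_le_integral_norm (μ := volume.restrict (Set.Ioc (0:ℝ) 1)) (fun t => v x - v t)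
    _ ≤ ∫ t in (0:ℝ)..1, (∫ s in Set.Ioc (0:ℝ) 1, |deriv v s|) := by
        apply intervalIntegral.integral_mono_on (by norm_num)
        · exact (intervalIntegrable_const.sub hvint).abs
        · exact intervalIntegrable_const
        · intro t ht; exact key t ht
    _ = ∫ s in Set.Ioc (0:ℝ) 1, |deriv v s| := by
        rw [intervalIntegral.integral_const]; simp


/-- Triple product bound combined with the strong Poincaré inequality: for `f` with zero
horizontal average, `|∫ f g h| ≤ C ‖∂₁f‖ ‖g‖^{1/2} ‖∂₂g‖^{1/2} ‖h‖`. -/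
theorem stmt19 : ∃ C : ℝ, 0 < C ∧ ∀ f g h : ℝ × ℝ → ℝ,
    Per f → Per g → Per h → Differentiable ℝ f → Differentiable ℝ g →
    (∀ y, havg f y = 0) →
    MemLp f 2 μΩ → MemLp (pd1 f) 2 μΩ →
    MemLp g 2 μΩ → MemLp (pd2 g) 2 μΩ → MemLp h 2 μΩ →
    |∫ p, f p * g p * h p ∂μΩ| ≤
      C * (eLpNorm (pd1 f) 2 μΩ).toReal *
        (eLpNorm g 2 μΩ).toReal ^ (1/2 : ℝ) * (eLpNorm (pd2 g) 2 μΩ).toReal ^ (1/2 : ℝ) *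
        (eLpNorm h 2 μΩ).toReal := by
  refine ⟨2, two_pos, ?_⟩
  intro f g h _ _ _ hdf hdg hfavg hfL2 hf1L2 hgL2 hg2L2 hhL2
  set ν : Measure ℝ := volume.restrict (Set.Ioc (0:ℝ) 1) with hν
  have hμ : μΩ = ν.prod volume := rfl
  have hνuniv : ν Set.univ = 1 := by
    rw [hν, Measure.restrict_apply_univ, Real.volume_Ioc]
    norm_num
  set h' : ℝ × ℝ → ℝ := hhL2.1.mk h with hh'
  have mh' : Measurable h' := hhL2.1.stronglyMeasurable_mk.measurable
  have heq' : h =ᵐ[μΩ] h' := hhL2.1.ae_eq_mk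
  have mf : Measurable f := hdf.continuous.measurable
  have mg : Measurable g := hdg.continuous.measurable
  have hconj : Real.HolderConjugate 2 2 := Real.HolderConjugate.two_two
  set A2 : ENNReal := ∫⁻ p, (‖pd1 f p‖₊ : ENNReal) ^ (2:ℝ) ∂μΩ with hA2
  set B2 : ENNReal := ∫⁻ p, (‖g p‖₊ : ENNReal) ^ (2:ℝ) ∂μΩ with hB2
  set D2 : ENNReal := ∫⁻ p, (‖pd2 g p‖₊ : ENNReal) ^ (2:ℝ) ∂μΩ with hD2
  set H2 : ENNReal := ∫⁻ p, (‖h' p‖₊ : ENNReal) ^ (2:ℝ) ∂μΩ with hH2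
  set Q : ℝ → ENNReal := fun y => ∫⁻ s, (‖pd1 f (s, y)‖₊ : ENNReal) ∂ν with hQdef
  set R : ℝ → ENNReal :=
    fun x => ∫⁻ t, (‖g (x, t)‖₊ : ENNReal) * (‖pd2 g (x, t)‖₊ : ENNReal) with hRdef
  set S : ℝ → ENNReal := fun x => ∫⁻ t, (‖h' (x, t)‖₊ : ENNReal) ^ (2:ℝ) with hSdef
  -- eLpNorm identities
  have heA : eLpNorm (pd1 f) 2 μΩ = A2 ^ (1/2:ℝ) := by
    rw [eLpNorm_eq_lintegral_rpow_enorm_toReal (by norm_num) (by norm_num)]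
    simp only [ENNReal.toReal_ofNat, enorm_eq_nnnorm]
    rfl
  have heB : eLpNorm g 2 μΩ = B2 ^ (1/2:ℝ) := by
    rw [eLpNorm_eq_lintegral_rpow_enorm_toReal (by norm_num) (by norm_num)]
    simp only [ENNReal.toReal_ofNat, enorm_eq_nnnorm]
    rfl
  have heD : eLpNorm (pd2 g) 2 μΩ = D2 ^ (1/2:ℝ) := by
    rw [eLpNorm_eq_lintegral_rpow_enorm_toReal (by norm_num) (by norm_num)]
    simp only [ENNReal.toReal_ofNat, enorm_eq_nnnorm]
    rfl
  have heH : eLpNorm h' 2 μΩ = H2 ^ (1/2:ℝ) := by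
    rw [eLpNorm_eq_lintegral_rpow_enorm_toReal (by norm_num) (by norm_num)]
    simp only [ENNReal.toReal_ofNat, enorm_eq_nnnorm]
    rfl
  -- main steps
  have hfin : A2 ^ (1/2:ℝ) ≠ ⊤ := by rw [← heA]; exact hf1L2.2.ne
  have hfinB : B2 ^ (1/2:ℝ) ≠ ⊤ := by rw [← heB]; exact hgL2.2.ne
  have hfinD : D2 ^ (1/2:ℝ) ≠ ⊤ := by rw [← heD]; exact hg2L2.2.ne
  have hfinH : H2 ^ (1/2:ℝ) ≠ ⊤ := by
    rw [← heH, ← eLpNorm_congr_ae heq']; exact hhL2.2.ne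
  have step_f : ∀ y : ℝ, ∀ x ∈ Set.Ioc (0:ℝ) 1, (‖f (x, y)‖₊ : ENNReal) ≤ Q y := by
    intro y x hx
    have mslice : Measurable (fun s => pd1 f (s, y)) := by
      have hid : (fun s => pd1 f (s, y)) = deriv (fun x => f (x, y)) := rfl
      rw [hid]; exact measurable_deriv _
    by_cases hintg : IntegrableOn (fun s => pd1 f (s, y)) (Set.Ioc (0:ℝ) 1) volume
    · have hdslice : Differentiable ℝ (fun s => f (s, y)) := by
        intro s
        exact (hdf (s, y)).comp s (differentiableAt_id.prodMk (differentiableAt_const y))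
      have h0 : ∫ t in (0:ℝ)..1, f (t, y) = 0 := hfavg y
      have hb := poin1d (fun s => f (s, y)) hdslice h0 hintg x ⟨hx.1.le, hx.2⟩
      have e1 : (‖f (x, y)‖₊ : ENNReal) = ENNReal.ofReal |f (x, y)| := by
        rw [← enorm_eq_nnnorm, ← ofReal_norm, Real.norm_eq_abs]
      rw [e1]
      refine le_trans (ENNReal.ofReal_le_ofReal hb) (le_of_eq ?_)
      have hid2 : (deriv fun s => f (s, y)) = fun s => pd1 f (s, y) := rfl
      rw [hid2]
      rw [ofReal_integral_eq_lintegral_ofReal hintg.abs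
        (ae_of_all _ fun s => abs_nonneg _)]
      rw [hQdef, hν]
      apply lintegral_congr
      intro s
      exact mul_enn' _
    · have hQtop : Q y = ⊤ := by
        by_contra hne
        apply hintg
        refine ⟨mslice.aestronglyMeasurable, ?_⟩
        rw [hasFiniteIntegral_def]
        exact lt_top_iff_ne_top.mpr hne
      rw [hQtop]; exact le_top
  have step_fQ : (∫⁻ y, (Q y) ^ (2:ℝ)) ≤ A2 := by
    have hQ2 : ∀ y, Q y ^ (2:ℝ) ≤ ∫⁻ s, (‖pd1 f (s, y)‖₊ : ENNReal) ^ (2:ℝ) ∂ν := by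
      intro y
      have mslice : Measurable (fun s => pd1 f (s, y)) := by
        have hid : (fun s => pd1 f (s, y)) = deriv (fun x => f (x, y)) := rfl
        rw [hid]; exact measurable_deriv _
      have h1 := ENNReal.lintegral_mul_le_Lp_mul_Lq ν hconj
        (f := fun s => (‖pd1 f (s, y)‖₊ : ENNReal)) (g := fun _ => (1:ENNReal))
        mslice.nnnorm.coe_nnreal_ennreal.aemeasurable aemeasurable_const
      simp only [Pi.mul_apply, mul_one, ENNReal.one_rpow, lintegral_one, hνuniv,
        ENNReal.one_rpow] at h1
      calc Q y ^ (2:ℝ)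
          ≤ ((∫⁻ s, (‖pd1 f (s, y)‖₊ : ENNReal) ^ (2:ℝ) ∂ν) ^ (1/2:ℝ)) ^ (2:ℝ) :=
            ENNReal.rpow_le_rpow h1 (by norm_num)
        _ = ∫⁻ s, (‖pd1 f (s, y)‖₊ : ENNReal) ^ (2:ℝ) ∂ν := by
            rw [← ENNReal.rpow_mul]; norm_num
    calc (∫⁻ y, (Q y) ^ (2:ℝ))
        ≤ ∫⁻ y, ∫⁻ s, (‖pd1 f (s, y)‖₊ : ENNReal) ^ (2:ℝ) ∂ν := lintegral_mono hQ2
      _ = A2 := by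
          rw [hA2, hμ, lintegral_prod_symm _ (hf1L2.1.aemeasurable.nnnorm.coe_nnreal_ennreal.pow_const (2:ℝ))]
  have hB2ne : B2 ≠ ⊤ := by
    intro htop
    apply hfinB
    rw [htop, ENNReal.top_rpow_of_pos (by norm_num)]
  have hD2ne : D2 ≠ ⊤ := by
    intro htop
    apply hfinD
    rw [htop, ENNReal.top_rpow_of_pos (by norm_num)]
  have hH2ne : H2 ≠ ⊤ := by
    intro htop
    apply hfinH
    rw [htop, ENNReal.top_rpow_of_pos (by norm_num)]
  have hA2ne : A2 ≠ ⊤ := by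
    intro htop
    apply hfin
    rw [htop, ENNReal.top_rpow_of_pos (by norm_num)]
  have hBsplit : B2 = ∫⁻ x, (∫⁻ t, (‖g (x, t)‖₊ : ENNReal) ^ (2:ℝ)) ∂ν := by
    rw [hB2, hμ, lintegral_prod _ (mg.nnnorm.coe_nnreal_ennreal.aemeasurable.pow_const (2:ℝ))]
  have hDsplit : D2 = ∫⁻ x, (∫⁻ t, (‖pd2 g (x, t)‖₊ : ENNReal) ^ (2:ℝ)) ∂ν := by
    rw [hD2, hμ, lintegral_prod _ (hg2L2.1.aemeasurable.nnnorm.coe_nnreal_ennreal.pow_const (2:ℝ))]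
  have aeB : ∀ᵐ x ∂ν, (∫⁻ t, (‖g (x, t)‖₊ : ENNReal) ^ (2:ℝ)) < ⊤ := by
    apply ae_lt_top' (aemeas_inner (mg.nnnorm.coe_nnreal_ennreal.aemeasurable.pow_const (2:ℝ)))
    rw [← hBsplit]; exact hB2ne
  have aeD : ∀ᵐ x ∂ν, (∫⁻ t, (‖pd2 g (x, t)‖₊ : ENNReal) ^ (2:ℝ)) < ⊤ := by
    apply ae_lt_top' (aemeas_inner (hg2L2.1.aemeasurable.nnnorm.coe_nnreal_ennreal.pow_const (2:ℝ)))
    rw [← hDsplit]; exact hD2ne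
  have step_g : ∀ᵐ x ∂ν, ∀ y : ℝ, (‖g (x, y)‖₊ : ENNReal) ≤ (2 * R x) ^ (1/2:ℝ) := by
    filter_upwards [aeB, aeD] with x hBx hDx
    intro y
    set u : ℝ → ℝ := fun t => g (x, t) with hu_def
    have hu : Differentiable ℝ u := by
      intro t
      exact (hdg (x, t)).comp t ((differentiableAt_const x).prodMk differentiableAt_id)
    have hderiv_eq : ∀ t, deriv u t = pd2 g (x, t) := fun t => rfl
    have mu : Measurable u := mg.comp measurable_prodMk_left
    have mu' : Measurable (deriv u) := measurable_deriv u
    have hu2 : Integrable (fun t => u t ^ 2) := by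
      refine ⟨((mu.pow_const 2).aestronglyMeasurable), ?_⟩
      rw [hasFiniteIntegral_def]
      calc (∫⁻ t, (‖u t ^ 2‖₊ : ENNReal)) = ∫⁻ t, (‖g (x, t)‖₊ : ENNReal) ^ (2:ℝ) := by
            apply lintegral_congr; intro t; exact sq_enn' (u t)
        _ < ⊤ := hBx
    have hu'2 : (∫⁻ t, (‖deriv u t‖₊ : ENNReal) ^ (2:ℝ)) < ⊤ := by
      calc (∫⁻ t, (‖deriv u t‖₊ : ENNReal) ^ (2:ℝ))
          = ∫⁻ t, (‖pd2 g (x, t)‖₊ : ENNReal) ^ (2:ℝ) := by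
            apply lintegral_congr; intro t; rw [hderiv_eq]
        _ < ⊤ := hDx
    have hw : Integrable (fun t => u t * deriv u t) := by
      refine ⟨(mu.mul mu').aestronglyMeasurable, ?_⟩
      rw [hasFiniteIntegral_def]
      have hee : (∫⁻ t, (‖u t * deriv u t‖₊ : ENNReal)) =
          ∫⁻ t, (‖u t‖₊ : ENNReal) * (‖deriv u t‖₊ : ENNReal) := by
        apply lintegral_congr; intro t
        rw [← mul_enn]
        rw [← enorm_eq_nnnorm, ← ofReal_norm, Real.norm_eq_abs]
      simp only [enorm_eq_nnnorm]; rw [hee]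
      have hh := ENNReal.lintegral_mul_le_Lp_mul_Lq (volume : Measure ℝ) hconj
        (f := fun t => (‖u t‖₊ : ENNReal)) (g := fun t => (‖deriv u t‖₊ : ENNReal))
        mu.nnnorm.coe_nnreal_ennreal.aemeasurable mu'.nnnorm.coe_nnreal_ennreal.aemeasurable
      simp only [Pi.mul_apply] at hh
      refine lt_of_le_of_lt hh ?_
      apply ENNReal.mul_lt_top
      · apply ENNReal.rpow_lt_top_of_nonneg (by norm_num)
        have : (∫⁻ t, (‖u t‖₊ : ENNReal) ^ (2:ℝ)) < ⊤ := hBx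
        exact this.ne
      · exact (ENNReal.rpow_lt_top_of_nonneg (by norm_num) hu'2.ne)
    have hag := agmon1d u hu hu2 hw y
    have e1 : (‖g (x, y)‖₊ : ENNReal) ^ (2:ℝ) ≤ 2 * R x := by
      rw [sq_enn]
      calc ENNReal.ofReal (g (x, y) ^ 2)
          ≤ ENNReal.ofReal (2 * ∫ t, |u t * deriv u t|) := ENNReal.ofReal_le_ofReal hag
        _ = 2 * ENNReal.ofReal (∫ t, |u t * deriv u t|) := by
            rw [ENNReal.ofReal_mul (by norm_num : (0:ℝ) ≤ 2), ENNReal.ofReal_ofNat]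
        _ = 2 * ∫⁻ t, ENNReal.ofReal |u t * deriv u t| := by
            rw [ofReal_integral_eq_lintegral_ofReal hw.abs
              (ae_of_all _ fun t => abs_nonneg _)]
        _ = 2 * R x := by
            rw [hRdef]
            congr 1
            apply lintegral_congr
            intro t
            rw [mul_enn]
            rw [hderiv_eq]
    have e2 : (‖g (x, y)‖₊ : ENNReal) = (((‖g (x, y)‖₊ : ENNReal)) ^ (2:ℝ)) ^ (1/2:ℝ) := by
      rw [← ENNReal.rpow_mul]; norm_num
    rw [e2]
    exact ENNReal.rpow_le_rpow e1 (by norm_num)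
  have step_R : (∫⁻ x, 2 * R x ∂ν) ≤ 2 * (B2 ^ (1/2:ℝ) * D2 ^ (1/2:ℝ)) := by
    rw [lintegral_const_mul' 2 R (by norm_num)]
    apply mul_le_mul_right
    have hRint : (∫⁻ x, R x ∂ν) =
        ∫⁻ p, (‖g p‖₊ : ENNReal) * (‖pd2 g p‖₊ : ENNReal) ∂μΩ := by
      rw [hμ, lintegral_prod (fun p => (‖g p‖₊ : ENNReal) * (‖pd2 g p‖₊ : ENNReal)) (mg.nnnorm.coe_nnreal_ennreal.aemeasurable.mul hg2L2.1.aemeasurable.nnnorm.coe_nnreal_ennreal)]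
    rw [hRint]
    have hh := ENNReal.lintegral_mul_le_Lp_mul_Lq μΩ hconj
      (f := fun p => (‖g p‖₊ : ENNReal)) (g := fun p => (‖pd2 g p‖₊ : ENNReal))
      mg.nnnorm.coe_nnreal_ennreal.aemeasurable hg2L2.1.aemeasurable.nnnorm.coe_nnreal_ennreal
    simp only [Pi.mul_apply] at hh
    exact hh
  have step_S : (∫⁻ x, S x ∂ν) = H2 := by
    rw [hH2, hμ, lintegral_prod _ ((mh'.aemeasurable.nnnorm.coe_nnreal_ennreal).pow_const (2:ℝ))]
  have hRmeas : AEMeasurable R ν := aemeas_inner (mg.nnnorm.coe_nnreal_ennreal.aemeasurable.mul hg2L2.1.aemeasurable.nnnorm.coe_nnreal_ennreal)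
  have hSmeas : Measurable S := (mh'.nnnorm.coe_nnreal_ennreal.pow_const (2:ℝ)).lintegral_prod_right'
  have aeR : ∀ᵐ x ∂ν, R x < ⊤ := by
    apply ae_lt_top' hRmeas
    intro htop
    have h1 : (∫⁻ x, 2 * R x ∂ν) = 2 * ∫⁻ x, R x ∂ν := lintegral_const_mul' 2 R (by norm_num)
    have h2 : (∫⁻ x, 2 * R x ∂ν) = ⊤ := by
      rw [h1, htop, ENNReal.mul_top (by norm_num)]
    have h3 := step_R
    rw [h2] at h3
    have h4 : 2 * (B2 ^ (1/2:ℝ) * D2 ^ (1/2:ℝ)) ≠ ⊤ :=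
      ENNReal.mul_ne_top (by norm_num) (ENNReal.mul_ne_top hfinB hfinD)
    exact h4 (top_le_iff.mp h3)
  have step_T : (∫⁻ p, (‖f p‖₊ : ENNReal) * (‖g p‖₊ : ENNReal) * (‖h' p‖₊ : ENNReal) ∂μΩ) ≤
      A2 ^ (1/2:ℝ) * ((2 * (B2 ^ (1/2:ℝ) * D2 ^ (1/2:ℝ))) ^ (1/2:ℝ) * H2 ^ (1/2:ℝ)) := by
    have amF : AEMeasurable
        (fun p : ℝ × ℝ => (‖f p‖₊ : ENNReal) * (‖g p‖₊ : ENNReal) * (‖h' p‖₊ : ENNReal)) μΩ :=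
      (mf.nnnorm.coe_nnreal_ennreal.mul mg.nnnorm.coe_nnreal_ennreal).aemeasurable.mul mh'.nnnorm.coe_nnreal_ennreal.aemeasurable
    rw [hμ] at amF ⊢
    rw [lintegral_prod _ amF]
    have hinner : ∀ᵐ x ∂ν, (∫⁻ y, (‖f (x, y)‖₊ : ENNReal) * (‖g (x, y)‖₊ : ENNReal) *
        (‖h' (x, y)‖₊ : ENNReal)) ≤ A2 ^ (1/2:ℝ) * ((2 * R x) ^ (1/2:ℝ) * (S x) ^ (1/2:ℝ)) := by
      filter_upwards [step_g, ae_restrict_mem measurableSet_Ioc, aeR] with x hgx hxmem hRx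
      have h2Rne : (2 * R x) ^ (1/2:ℝ) ≠ ⊤ := by
        apply ENNReal.rpow_ne_top_of_nonneg (by norm_num)
        exact ENNReal.mul_ne_top (by norm_num) hRx.ne
      calc (∫⁻ y, (‖f (x, y)‖₊ : ENNReal) * (‖g (x, y)‖₊ : ENNReal) * (‖h' (x, y)‖₊ : ENNReal))
          ≤ ∫⁻ y, (2 * R x) ^ (1/2:ℝ) * ((‖f (x, y)‖₊ : ENNReal) * (‖h' (x, y)‖₊ : ENNReal)) := by
            apply lintegral_mono
            intro y
            calc (‖f (x, y)‖₊ : ENNReal) * (‖g (x, y)‖₊ : ENNReal) * (‖h' (x, y)‖₊ : ENNReal)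
                ≤ (‖f (x, y)‖₊ : ENNReal) * ((2 * R x) ^ (1/2:ℝ)) * (‖h' (x, y)‖₊ : ENNReal) := by
                  gcongr
                  exact hgx y
              _ = (2 * R x) ^ (1/2:ℝ) * ((‖f (x, y)‖₊ : ENNReal) * (‖h' (x, y)‖₊ : ENNReal)) := by
                  ring
        _ = (2 * R x) ^ (1/2:ℝ) *
            ∫⁻ y, (‖f (x, y)‖₊ : ENNReal) * (‖h' (x, y)‖₊ : ENNReal) :=
            lintegral_const_mul' _ _ h2Rne
        _ ≤ (2 * R x) ^ (1/2:ℝ) * ((∫⁻ y, (‖f (x, y)‖₊ : ENNReal) ^ (2:ℝ)) ^ (1/2:ℝ) *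
            (∫⁻ y, (‖h' (x, y)‖₊ : ENNReal) ^ (2:ℝ)) ^ (1/2:ℝ)) := by
            apply mul_le_mul_right
            have hh := ENNReal.lintegral_mul_le_Lp_mul_Lq (volume : Measure ℝ) hconj
              (f := fun y => (‖f (x, y)‖₊ : ENNReal)) (g := fun y => (‖h' (x, y)‖₊ : ENNReal))
              (mf.comp measurable_prodMk_left).nnnorm.coe_nnreal_ennreal.aemeasurable
              (mh'.comp measurable_prodMk_left).nnnorm.coe_nnreal_ennreal.aemeasurable
            simp only [Pi.mul_apply] at hh
            exact hh
        _ ≤ (2 * R x) ^ (1/2:ℝ) * (A2 ^ (1/2:ℝ) * (S x) ^ (1/2:ℝ)) := by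
            apply mul_le_mul_right
            apply mul_le_mul_left
            apply ENNReal.rpow_le_rpow _ (by norm_num)
            calc (∫⁻ y, (‖f (x, y)‖₊ : ENNReal) ^ (2:ℝ)) ≤ ∫⁻ y, Q y ^ (2:ℝ) := by
                  apply lintegral_mono
                  intro y
                  exact ENNReal.rpow_le_rpow (step_f y x hxmem) (by norm_num)
              _ ≤ A2 := step_fQ
        _ = A2 ^ (1/2:ℝ) * ((2 * R x) ^ (1/2:ℝ) * (S x) ^ (1/2:ℝ)) := by ring
    calc (∫⁻ x, (∫⁻ y, (‖f (x, y)‖₊ : ENNReal) * (‖g (x, y)‖₊ : ENNReal) *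
          (‖h' (x, y)‖₊ : ENNReal)) ∂ν)
        ≤ ∫⁻ x, A2 ^ (1/2:ℝ) * ((2 * R x) ^ (1/2:ℝ) * (S x) ^ (1/2:ℝ)) ∂ν :=
          lintegral_mono_ae hinner
      _ = A2 ^ (1/2:ℝ) * ∫⁻ x, (2 * R x) ^ (1/2:ℝ) * (S x) ^ (1/2:ℝ) ∂ν :=
          lintegral_const_mul' _ _ hfin
      _ ≤ A2 ^ (1/2:ℝ) * ((∫⁻ x, ((2 * R x) ^ (1/2:ℝ)) ^ (2:ℝ) ∂ν) ^ (1/2:ℝ) *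
          (∫⁻ x, ((S x) ^ (1/2:ℝ)) ^ (2:ℝ) ∂ν) ^ (1/2:ℝ)) := by
          apply mul_le_mul_right
          have hh := ENNReal.lintegral_mul_le_Lp_mul_Lq ν hconj
            (f := fun x => (2 * R x) ^ (1/2:ℝ)) (g := fun x => (S x) ^ (1/2:ℝ))
            ((hRmeas.const_mul 2).pow_const (1/2:ℝ))
            (hSmeas.aemeasurable.pow_const (1/2:ℝ))
          simp only [Pi.mul_apply] at hh
          exact hh
      _ = A2 ^ (1/2:ℝ) * ((∫⁻ x, 2 * R x ∂ν) ^ (1/2:ℝ) * (∫⁻ x, S x ∂ν) ^ (1/2:ℝ)) := by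
          congr 2
          · congr 1
            apply lintegral_congr
            intro x
            rw [← ENNReal.rpow_mul]
            norm_num
          · congr 1
            apply lintegral_congr
            intro x
            rw [← ENNReal.rpow_mul]
            norm_num
      _ ≤ A2 ^ (1/2:ℝ) * ((2 * (B2 ^ (1/2:ℝ) * D2 ^ (1/2:ℝ))) ^ (1/2:ℝ) * H2 ^ (1/2:ℝ)) := by
          apply mul_le_mul_right
          apply mul_le_mul'
          · exact ENNReal.rpow_le_rpow step_R (by norm_num)
          · rw [step_S]
  -- conversion to the real goal
  set E : ENNReal :=
    A2 ^ (1/2:ℝ) * ((2 * (B2 ^ (1/2:ℝ) * D2 ^ (1/2:ℝ))) ^ (1/2:ℝ) * H2 ^ (1/2:ℝ)) with hE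
  have hEfin : E ≠ ⊤ := by
    apply ENNReal.mul_ne_top hfin
    apply ENNReal.mul_ne_top _ hfinH
    apply ENNReal.rpow_ne_top_of_nonneg (by norm_num)
    exact ENNReal.mul_ne_top (by norm_num) (ENNReal.mul_ne_top hfinB hfinD)
  have hEE : E = (2:ENNReal) ^ (1/2:ℝ) * (eLpNorm (pd1 f) 2 μΩ *
      ((eLpNorm g 2 μΩ) ^ (1/2:ℝ) * ((eLpNorm (pd2 g) 2 μΩ) ^ (1/2:ℝ) * eLpNorm h' 2 μΩ))) := by
    rw [hE, heA, heB, heD, heH,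
      ENNReal.mul_rpow_of_nonneg _ _ (by norm_num : (0:ℝ) ≤ 1/2),
      ENNReal.mul_rpow_of_nonneg _ _ (by norm_num : (0:ℝ) ≤ 1/2)]
    ring
  have hEval : E.toReal = (2:ℝ) ^ (1/2:ℝ) * ((eLpNorm (pd1 f) 2 μΩ).toReal *
      ((eLpNorm g 2 μΩ).toReal ^ (1/2:ℝ) * ((eLpNorm (pd2 g) 2 μΩ).toReal ^ (1/2:ℝ) *
        (eLpNorm h' 2 μΩ).toReal))) := by
    rw [hEE, ENNReal.toReal_mul, ENNReal.toReal_mul, ENNReal.toReal_mul, ENNReal.toReal_mul,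
      ← ENNReal.toReal_rpow, ← ENNReal.toReal_rpow, ← ENNReal.toReal_rpow, ENNReal.toReal_ofNat]
  -- reduce goal
  rw [show eLpNorm h 2 μΩ = eLpNorm h' 2 μΩ from eLpNorm_congr_ae heq']
  have habs : |∫ p, f p * g p * h p ∂μΩ| ≤
      (∫⁻ p, (‖f p‖₊ : ENNReal) * (‖g p‖₊ : ENNReal) * (‖h' p‖₊ : ENNReal) ∂μΩ).toReal := by
    rw [integral_congr_ae (by filter_upwards [heq'] with p hp; rw [hp] :
      (fun p => f p * g p * h p) =ᵐ[μΩ] fun p => f p * g p * h' p)]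
    have := norm_integral_le_lintegral_norm (μ := μΩ) (fun p => f p * g p * h' p)
    rw [Real.norm_eq_abs] at this
    refine this.trans (le_of_eq ?_)
    congr 1
    apply lintegral_congr
    intro p
    rw [ofReal_norm, enorm_eq_nnnorm]
    push_cast [nnnorm_mul]
    ring
  refine habs.trans ?_
  have hTE : (∫⁻ p, (‖f p‖₊ : ENNReal) * (‖g p‖₊ : ENNReal) * (‖h' p‖₊ : ENNReal) ∂μΩ).toReal
      ≤ E.toReal := ENNReal.toReal_mono hEfin step_T
  refine hTE.trans ?_
  rw [hEval]
  have h2le : (2:ℝ) ^ (1/2:ℝ) ≤ 2 := by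
    calc (2:ℝ) ^ (1/2:ℝ) ≤ (2:ℝ) ^ (1:ℝ) :=
          Real.rpow_le_rpow_of_exponent_le one_le_two (by norm_num)
      _ = 2 := Real.rpow_one 2
  have hX : (0:ℝ) ≤ (eLpNorm (pd1 f) 2 μΩ).toReal *
      ((eLpNorm g 2 μΩ).toReal ^ (1/2:ℝ) * ((eLpNorm (pd2 g) 2 μΩ).toReal ^ (1/2:ℝ) *
        (eLpNorm h' 2 μΩ).toReal)) := by positivity
  refine le_trans (mul_le_mul_of_nonneg_right h2le hX) (le_of_eq (by ring))
end
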